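/- arXiv:2109.04900 — 7 statements merged into one kernel-verified Lean document; each statement's English description precedes it below -/
import Mathlib

section
/- In every 3-edge-coloring of the complete graph K_n on n vertices, either there is a monochromatic connected subgraph of diameter at most 3 on at least n/2 vertices, or every one of the three color classes is a spanning connected subgraph of K_n of diameter at most 4. -/
/-- The spanning subgraph of the complete graph on `Fin n` consisting of the
edges of color `i`, given an edge-coloring `c` with `r` colors. -/
def colorGraph {n r : ℕ} (c : Sym2 (Fin n) → Fin r) (i : Fin r) : SimpleGraph (Fin n) where
  Adj u v := u ≠ v ∧ c s(u, v) = i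
  symm := ⟨fun u v h => ⟨h.1.symm, by rw [Sym2.eq_swap]; exact h.2⟩⟩
  loopless := ⟨fun u h => h.1 rfl⟩

open SimpleGraph Finset

private lemma cg_swap {n : ℕ} (c : Sym2 (Fin n) → Fin 3) (x y : Fin n) :
    c s(x, y) = c s(y, x) := by rw [Sym2.eq_swap]

/-- A walk of length ≤ 1 between endpoints of an edge of color `e` (or equal vertices). -/
private lemma mini {n : ℕ} {c : Sym2 (Fin n) → Fin 3} {e : Fin 3} {x y : Fin n}
    (h : c s(x, y) = e) :
    ∃ w : (colorGraph c e).Walk x y, w.length ≤ 1 ∧ ∀ z ∈ w.support, z = x ∨ z = y := by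
  by_cases hxy : x = y
  · subst hxy
    exact ⟨.nil, by simp, by simp⟩
  · refine ⟨.cons (show (colorGraph c e).Adj x y from ⟨hxy, h⟩) .nil, by simp, ?_⟩
    intro z hz
    simp only [Walk.support_cons, Walk.support_nil, List.mem_cons, List.mem_singleton,
      List.not_mem_nil, or_false] at hz
    tauto

/-- Double star: all vertices attached to one of two adjacent centers give a
diameter-3 monochromatic set. -/
private lemma dstar {n : ℕ} {c : Sym2 (Fin n) → Fin 3} {e : Fin 3} {p q : Fin n}
    (hpq : c s(p, q) = e) (S : Finset (Fin n)) (hp : p ∈ S) (hq : q ∈ S)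
    (hmem : ∀ x ∈ S, c s(p, x) = e ∨ c s(x, q) = e) :
    ∀ x ∈ S, ∀ y ∈ S, ∃ w : (colorGraph c e).Walk x y,
      w.length ≤ 3 ∧ ∀ z ∈ w.support, z ∈ S := by
  have hub : ∀ x ∈ S, ∃ (hb : Fin n) (w : (colorGraph c e).Walk x hb),
      (hb = p ∨ hb = q) ∧ w.length ≤ 1 ∧ ∀ z ∈ w.support, z = x ∨ z ∈ S := by
    intro x hx
    rcases hmem x hx with h | h
    · obtain ⟨w, hl, hs⟩ := mini (show c s(x, p) = e by rw [cg_swap c x p]; exact h)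
      refine ⟨p, w, Or.inl rfl, hl, fun z hz => ?_⟩
      rcases hs z hz with h1 | h1
      · exact Or.inl h1
      · exact Or.inr (by rw [h1]; exact hp)
    · obtain ⟨w, hl, hs⟩ := mini h
      refine ⟨q, w, Or.inr rfl, hl, fun z hz => ?_⟩
      rcases hs z hz with h1 | h1
      · exact Or.inl h1
      · exact Or.inr (by rw [h1]; exact hq)
  intro x hx y hy
  obtain ⟨h1, w1, hb1, l1, s1⟩ := hub x hx
  obtain ⟨h2, w2, hb2, l2, s2⟩ := hub y hy
  have hqp : c s(q, p) = e := by rw [cg_swap c q p]; exact hpq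
  have mid : ∃ m : (colorGraph c e).Walk h1 h2, m.length ≤ 1 ∧ ∀ z ∈ m.support, z ∈ S := by
    rcases hb1 with rfl | rfl <;> rcases hb2 with rfl | rfl
    · exact ⟨.nil, by simp, by simpa using hp⟩
    · obtain ⟨m, hl, hs⟩ := mini hpq
      refine ⟨m, hl, fun z hz => ?_⟩
      rcases hs z hz with rfl | rfl
      · exact hp
      · exact hq
    · obtain ⟨m, hl, hs⟩ := mini hqp
      refine ⟨m, hl, fun z hz => ?_⟩
      rcases hs z hz with rfl | rfl
      · exact hq
      · exact hp
    · exact ⟨.nil, by simp, by simpa using hq⟩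
  obtain ⟨m, lm, sm⟩ := mid
  refine ⟨w1.append (m.append w2.reverse), ?_, ?_⟩
  · simp only [Walk.length_append, Walk.length_reverse]
    omega
  · intro z hz
    rw [Walk.mem_support_append_iff] at hz
    rcases hz with hz | hz
    · rcases s1 z hz with rfl | h
      · exact hx
      · exact h
    · rw [Walk.mem_support_append_iff] at hz
      rcases hz with hz | hz
      · exact sm z hz
      · rw [Walk.support_reverse, List.mem_reverse] at hz
        rcases s2 z hz with rfl | h
        · exact hy
        · exact h

/-- Star: all vertices attached to one center give a diameter-2 monochromatic set. -/
private lemma star {n : ℕ} {c : Sym2 (Fin n) → Fin 3} {e : Fin 3} {p : Fin n}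
    (S : Finset (Fin n)) (hp : p ∈ S)
    (hmem : ∀ x ∈ S, x = p ∨ c s(p, x) = e) :
    ∀ x ∈ S, ∀ y ∈ S, ∃ w : (colorGraph c e).Walk x y,
      w.length ≤ 3 ∧ ∀ z ∈ w.support, z ∈ S := by
  have leg : ∀ x ∈ S, ∃ w : (colorGraph c e).Walk x p,
      w.length ≤ 1 ∧ ∀ z ∈ w.support, z ∈ S := by
    intro x hx
    rcases hmem x hx with rfl | h
    · exact ⟨.nil, by simp, by simpa using hx⟩
    · obtain ⟨w, hl, hs⟩ := mini (show c s(x, p) = e by rw [cg_swap c x p]; exact h)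
      refine ⟨w, hl, fun z hz => ?_⟩
      rcases hs z hz with rfl | rfl
      · exact hx
      · exact hp
  intro x hx y hy
  obtain ⟨w1, l1, s1⟩ := leg x hx
  obtain ⟨w2, l2, s2⟩ := leg y hy
  refine ⟨w1.append w2.reverse, ?_, ?_⟩
  · simp only [Walk.length_append, Walk.length_reverse]
    omega
  · intro z hz
    rw [Walk.mem_support_append_iff] at hz
    rcases hz with hz | hz
    · exact s1 z hz
    · rw [Walk.support_reverse, List.mem_reverse] at hz
      exact s2 z hz

set_option maxHeartbeats 2000000 in
set_option synthInstance.maxHeartbeats 2000000 in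
set_option synthInstance.maxSize 2000 in
/-- Key finite verification: each vertex lies in at least two of the four double stars. -/
private lemma twoOfFour : ∀ (i j k i1 i2 i3 i4 : Fin 3), i ≠ j → i ≠ k → j ≠ k →
    ¬(i1 = i ∧ i2 = i) → ¬(i1 = i ∧ i4 = i) → ¬(i3 = i ∧ i2 = i) → ¬(i3 = i ∧ i4 = i) →
    2 ≤ ((if i1 = j ∨ i2 = j then 1 else 0) + (if i3 = k ∨ i2 = k then 1 else 0) +
      (if i1 = k ∨ i4 = k then 1 else 0) + (if i3 = j ∨ i4 = j then (1 : ℕ) else 0)) := by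
  decide

private lemma main_lemma {n : ℕ} (c : Sym2 (Fin n) → Fin 3) (i j k : Fin 3)
    (hall : ∀ x : Fin 3, x = i ∨ x = j ∨ x = k) (hij : i ≠ j) (hik : i ≠ k) (hjk : j ≠ k)
    (u v : Fin n) (hbad : ∀ p : (colorGraph c i).Walk u v, ¬ p.length ≤ 4)
    (huv : c s(u, v) = j) :
    ∃ (e : Fin 3) (S : Finset (Fin n)),
      (n : ℚ) / 2 ≤ S.card ∧
      ∀ x ∈ S, ∀ y ∈ S, ∃ p : (colorGraph c e).Walk x y,
        p.length ≤ 3 ∧ ∀ z ∈ p.support, z ∈ S := by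
  have chain2 : ∀ w, ¬ (c s(u, w) = i ∧ c s(w, v) = i) := by
    rintro w ⟨h1, h2⟩
    obtain ⟨w1, l1, -⟩ := mini h1
    obtain ⟨w2, l2, -⟩ := mini h2
    refine hbad (w1.append w2) ?_
    simp only [Walk.length_append]
    omega
  set S1 : Finset (Fin n) := univ.filter (fun w => c s(u, w) = j ∨ c s(w, v) = j) with hS1
  have huS1 : u ∈ S1 := mem_filter.mpr ⟨mem_univ _, Or.inr huv⟩
  have hvS1 : v ∈ S1 := mem_filter.mpr ⟨mem_univ _, Or.inl huv⟩
  by_cases hbig : (n : ℚ) / 2 ≤ S1.card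
  · exact ⟨j, S1, hbig, dstar huv S1 huS1 hvS1 (fun x hx => (mem_filter.mp hx).2)⟩
  push_neg at hbig
  have hcompl : ∀ T : Finset (Fin n), S1ᶜ ⊆ T → (n : ℚ) / 2 ≤ T.card := by
    intro T hT
    have h1 : S1.card + S1ᶜ.card = n := by
      rw [Finset.card_add_card_compl]; simp
    have h2 : S1ᶜ.card ≤ T.card := card_le_card hT
    have h1q : (S1.card : ℚ) + (S1ᶜ.card : ℚ) = n := by exact_mod_cast h1
    have h2q : ((S1ᶜ.card : ℚ)) ≤ T.card := by exact_mod_cast h2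
    linarith
  have hRmem : ∀ w, w ∉ S1 → ¬(c s(u, w) = j ∨ c s(w, v) = j) := by
    intro w hw h
    exact hw (mem_filter.mpr ⟨mem_univ _, h⟩)
  set A : Finset (Fin n) := univ.filter (fun w => c s(u, w) = i ∧ c s(w, v) = k) with hA
  set B : Finset (Fin n) := univ.filter (fun w => c s(u, w) = k ∧ c s(w, v) = i) with hB
  by_cases hAne : A.Nonempty
  · by_cases hBne : B.Nonempty
    · by_cases hex : ∃ a' ∈ A, ∃ b' ∈ B, c s(a', b') = j
      · -- four double stars, each vertex in at least two of them
        obtain ⟨a, ha, b, hb, hab⟩ := hex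
        have ha1 : c s(u, a) = i := (mem_filter.mp ha).2.1
        have ha2 : c s(a, v) = k := (mem_filter.mp ha).2.2
        have hb1 : c s(u, b) = k := (mem_filter.mp hb).2.1
        have hb2 : c s(b, v) = i := (mem_filter.mp hb).2.2
        have P3a : ∀ w, ¬(c s(u, w) = i ∧ c s(w, b) = i) := by
          rintro w ⟨h1, h2⟩
          obtain ⟨w1, l1, -⟩ := mini h1
          obtain ⟨w2, l2, -⟩ := mini h2
          obtain ⟨w3, l3, -⟩ := mini hb2
          refine hbad (w1.append (w2.append w3)) ?_
          simp only [Walk.length_append]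
          omega
        have P3b : ∀ w, ¬(c s(a, w) = i ∧ c s(w, v) = i) := by
          rintro w ⟨h1, h2⟩
          obtain ⟨w0, l0, -⟩ := mini ha1
          obtain ⟨w1, l1, -⟩ := mini h1
          obtain ⟨w2, l2, -⟩ := mini h2
          refine hbad (w0.append (w1.append w2)) ?_
          simp only [Walk.length_append]
          omega
        have P4 : ∀ w, ¬(c s(a, w) = i ∧ c s(w, b) = i) := by
          rintro w ⟨h1, h2⟩
          obtain ⟨w0, l0, -⟩ := mini ha1
          obtain ⟨w1, l1, -⟩ := mini h1
          obtain ⟨w2, l2, -⟩ := mini h2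
          obtain ⟨w3, l3, -⟩ := mini hb2
          refine hbad (w0.append (w1.append (w2.append w3))) ?_
          simp only [Walk.length_append]
          omega
        set S2 : Finset (Fin n) := univ.filter (fun w => c s(a, w) = k ∨ c s(w, v) = k) with hS2
        set S3 : Finset (Fin n) := univ.filter (fun w => c s(u, w) = k ∨ c s(w, b) = k) with hS3
        set S4 : Finset (Fin n) := univ.filter (fun w => c s(a, w) = j ∨ c s(w, b) = j) with hS4
        have key : 2 * n ≤ S1.card + S2.card + S3.card + S4.card := by
          have pt : ∀ w : Fin n, 2 ≤
              ((if c s(u, w) = j ∨ c s(w, v) = j then 1 else 0) +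
               (if c s(a, w) = k ∨ c s(w, v) = k then 1 else 0) +
               (if c s(u, w) = k ∨ c s(w, b) = k then 1 else 0) +
               (if c s(a, w) = j ∨ c s(w, b) = j then (1 : ℕ) else 0)) :=
            fun w => twoOfFour i j k _ _ _ _ hij hik hjk (chain2 w) (P3a w) (P3b w) (P4 w)
          have e1 : S1.card = ∑ w : Fin n, if c s(u, w) = j ∨ c s(w, v) = j then 1 else 0 := by
            rw [hS1]; exact Finset.card_filter _ _
          have e2 : S2.card = ∑ w : Fin n, if c s(a, w) = k ∨ c s(w, v) = k then 1 else 0 := by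
            rw [hS2]; exact Finset.card_filter _ _
          have e3 : S3.card = ∑ w : Fin n, if c s(u, w) = k ∨ c s(w, b) = k then 1 else 0 := by
            rw [hS3]; exact Finset.card_filter _ _
          have e4 : S4.card = ∑ w : Fin n, if c s(a, w) = j ∨ c s(w, b) = j then 1 else 0 := by
            rw [hS4]; exact Finset.card_filter _ _
          calc 2 * n = ∑ _w : Fin n, 2 := by
                simp [Finset.sum_const, mul_comm]
            _ ≤ ∑ w : Fin n,
                ((if c s(u, w) = j ∨ c s(w, v) = j then 1 else 0) +
                 (if c s(a, w) = k ∨ c s(w, v) = k then 1 else 0) +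
                 (if c s(u, w) = k ∨ c s(w, b) = k then 1 else 0) +
                 (if c s(a, w) = j ∨ c s(w, b) = j then (1 : ℕ) else 0)) :=
                Finset.sum_le_sum (fun w _ => pt w)
            _ = S1.card + S2.card + S3.card + S4.card := by
                rw [Finset.sum_add_distrib, Finset.sum_add_distrib, Finset.sum_add_distrib,
                  ← e1, ← e2, ← e3, ← e4]
        by_cases h2big : (n : ℚ) / 2 ≤ S2.card
        · exact ⟨k, S2, h2big, dstar ha2 S2 (mem_filter.mpr ⟨mem_univ _, Or.inr ha2⟩)
            (mem_filter.mpr ⟨mem_univ _, Or.inl ha2⟩) (fun x hx => (mem_filter.mp hx).2)⟩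
        by_cases h3big : (n : ℚ) / 2 ≤ S3.card
        · exact ⟨k, S3, h3big, dstar hb1 S3 (mem_filter.mpr ⟨mem_univ _, Or.inr hb1⟩)
            (mem_filter.mpr ⟨mem_univ _, Or.inl hb1⟩) (fun x hx => (mem_filter.mp hx).2)⟩
        by_cases h4big : (n : ℚ) / 2 ≤ S4.card
        · exact ⟨j, S4, h4big, dstar hab S4 (mem_filter.mpr ⟨mem_univ _, Or.inr hab⟩)
            (mem_filter.mpr ⟨mem_univ _, Or.inl hab⟩) (fun x hx => (mem_filter.mp hx).2)⟩
        · exfalso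
          push_neg at h2big h3big h4big
          have keyQ : ((2 * n : ℕ) : ℚ) ≤
              ((S1.card + S2.card + S3.card + S4.card : ℕ) : ℚ) := by exact_mod_cast key
          push_cast at keyQ
          linarith
      · -- all A–B edges have color k: a k-double-star on (a, v) covers S1ᶜ
        push_neg at hex
        obtain ⟨a, ha⟩ := hAne
        have ha1 : c s(u, a) = i := (mem_filter.mp ha).2.1
        have ha2 : c s(a, v) = k := (mem_filter.mp ha).2.2
        have hak : ∀ w ∈ B, c s(a, w) = k := by
          intro w hw
          have hw1 : c s(w, v) = i := (mem_filter.mp hw).2.2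
          rcases hall (c s(a, w)) with h | h | h
          · exfalso
            obtain ⟨w0, l0, -⟩ := mini ha1
            obtain ⟨w1, l1, -⟩ := mini h
            obtain ⟨w2, l2, -⟩ := mini hw1
            refine hbad (w0.append (w1.append w2)) ?_
            simp only [Walk.length_append]
            omega
          · exact absurd h (hex a ha w hw)
          · exact h
        refine ⟨k, univ.filter (fun w => c s(a, w) = k ∨ c s(w, v) = k), ?_,
          dstar ha2 _ (mem_filter.mpr ⟨mem_univ _, Or.inr ha2⟩)
            (mem_filter.mpr ⟨mem_univ _, Or.inl ha2⟩) (fun x hx => (mem_filter.mp hx).2)⟩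
        apply hcompl
        intro w hw
        rw [Finset.mem_compl] at hw
        have hw2 := hRmem w hw
        refine mem_filter.mpr ⟨mem_univ _, ?_⟩
        rcases hall (c s(w, v)) with h | h | h
        · rcases hall (c s(u, w)) with h1 | h1 | h1
          · exact absurd ⟨h1, h⟩ (chain2 w)
          · exact absurd (Or.inl h1) hw2
          · exact Or.inl (hak w (mem_filter.mpr ⟨mem_univ _, h1, h⟩))
        · exact absurd (Or.inr h) hw2
        · exact Or.inr h
    · -- B empty: a k-star at v covers S1ᶜ
      refine ⟨k, univ.filter (fun w => w = v ∨ c s(v, w) = k), ?_,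
        star _ (mem_filter.mpr ⟨mem_univ _, Or.inl rfl⟩) (fun x hx => (mem_filter.mp hx).2)⟩
      apply hcompl
      intro w hw
      rw [Finset.mem_compl] at hw
      have hw2 := hRmem w hw
      refine mem_filter.mpr ⟨mem_univ _, Or.inr ?_⟩
      rcases hall (c s(w, v)) with h | h | h
      · exfalso
        rcases hall (c s(u, w)) with h1 | h1 | h1
        · exact chain2 w ⟨h1, h⟩
        · exact hw2 (Or.inl h1)
        · exact hBne ⟨w, mem_filter.mpr ⟨mem_univ _, h1, h⟩⟩
      · exact absurd (Or.inr h) hw2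
      · rw [cg_swap c v w]; exact h
  · -- A empty: a k-star at u covers S1ᶜ
    refine ⟨k, univ.filter (fun w => w = u ∨ c s(u, w) = k), ?_,
      star _ (mem_filter.mpr ⟨mem_univ _, Or.inl rfl⟩) (fun x hx => (mem_filter.mp hx).2)⟩
    apply hcompl
    intro w hw
    rw [Finset.mem_compl] at hw
    have hw2 := hRmem w hw
    refine mem_filter.mpr ⟨mem_univ _, Or.inr ?_⟩
    rcases hall (c s(u, w)) with h | h | h
    · exfalso
      rcases hall (c s(w, v)) with h1 | h1 | h1
      · exact chain2 w ⟨h, h1⟩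
      · exact hw2 (Or.inr h1)
      · exact hAne ⟨w, mem_filter.mpr ⟨mem_univ _, h, h1⟩⟩
    · exact absurd (Or.inl h) hw2
    · exact h

/-- In every 3-edge-coloring of `K_n`, either there is a monochromatic connected
subgraph of diameter at most 3 on at least `n/2` vertices, or every color class is
a spanning connected subgraph of diameter at most 4. -/
theorem monochromatic_diam_three_or_all_spanning_diam_four
    (n : ℕ) (c : Sym2 (Fin n) → Fin 3) :
    (∃ (i : Fin 3) (S : Finset (Fin n)),
        (n : ℚ) / 2 ≤ S.card ∧
        ∀ u ∈ S, ∀ v ∈ S, ∃ p : (colorGraph c i).Walk u v,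
          p.length ≤ 3 ∧ ∀ x ∈ p.support, x ∈ S) ∨
    (∀ (i : Fin 3) (u v : Fin n), ∃ p : (colorGraph c i).Walk u v, p.length ≤ 4) := by
  by_cases h : ∀ (i : Fin 3) (u v : Fin n), ∃ p : (colorGraph c i).Walk u v, p.length ≤ 4
  · exact Or.inr h
  · left
    push_neg at h
    obtain ⟨i, u, v, hbad0⟩ := h
    have hbad : ∀ p : (colorGraph c i).Walk u v, ¬ p.length ≤ 4 :=
      fun p => not_le.mpr (hbad0 p)
    have hi : c s(u, v) ≠ i := by
      intro hc
      obtain ⟨w, hl, -⟩ := mini hc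
      exact hbad w (hl.trans (by norm_num))
    rcases (by decide : ∀ x : Fin 3, x = 0 ∨ x = 1 ∨ x = 2) i with rfl | rfl | rfl <;>
      rcases (by decide : ∀ x : Fin 3, x = 0 ∨ x = 1 ∨ x = 2) (c s(u, v)) with hc | hc | hc
    · exact absurd hc hi
    · exact main_lemma c 0 1 2 (by decide) (by decide) (by decide) (by decide) u v hbad hc
    · exact main_lemma c 0 2 1 (by decide) (by decide) (by decide) (by decide) u v hbad hc
    · exact main_lemma c 1 0 2 (by decide) (by decide) (by decide) (by decide) u v hbad hc
    · exact absurd hc hi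
    · exact main_lemma c 1 2 0 (by decide) (by decide) (by decide) (by decide) u v hbad hc
    · exact main_lemma c 2 0 1 (by decide) (by decide) (by decide) (by decide) u v hbad hc
    · exact main_lemma c 2 1 0 (by decide) (by decide) (by decide) (by decide) u v hbad hc
    · exact absurd hc hi
end

section
/- In every 3-edge-coloring of the complete graph K_n on n vertices, there is a monochromatic connected subgraph of diameter at most 4 on at least n/2 vertices. -/
namespace MonoBall

variable {n : ℕ}

/-- radius-2 ball around `v` in color `i`. -/
def ball (c : Sym2 (Fin n) → Fin 3) (i : Fin 3) (v : Fin n) : Finset (Fin n) :=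
  Finset.univ.filter fun x =>
    x = v ∨ c s(v, x) = i ∨ ∃ z, c s(v, z) = i ∧ c s(z, x) = i

lemma mem_ball {c : Sym2 (Fin n) → Fin 3} {i : Fin 3} {v x : Fin n} :
    x ∈ ball c i v ↔
      x = v ∨ c s(v, x) = i ∨ ∃ z, c s(v, z) = i ∧ c s(z, x) = i := by
  simp [ball]

lemma self_mem_ball {c : Sym2 (Fin n) → Fin 3} {i : Fin 3} {v : Fin n} :
    v ∈ ball c i v := mem_ball.2 (Or.inl rfl)

lemma mem_ball_of_edge {c : Sym2 (Fin n) → Fin 3} {i : Fin 3} {v x : Fin n}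
    (h : c s(v, x) = i) : x ∈ ball c i v := mem_ball.2 (Or.inr (Or.inl h))

lemma mem_ball_of_two {c : Sym2 (Fin n) → Fin 3} {i : Fin 3} {v z x : Fin n}
    (h1 : c s(v, z) = i) (h2 : c s(z, x) = i) : x ∈ ball c i v :=
  mem_ball.2 (Or.inr (Or.inr ⟨z, h1, h2⟩))

lemma ball_walk {c : Sym2 (Fin n) → Fin 3} {i : Fin 3} {v x : Fin n}
    (hx : x ∈ ball c i v) :
    ∃ p : (colorGraph c i).Walk v x, p.length ≤ 2 ∧ ∀ z ∈ p.support, z ∈ ball c i v := by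
  have hv : v ∈ ball c i v := self_mem_ball
  by_cases hxv : x = v
  · subst hxv; exact ⟨.nil, by simp, by simp [hv]⟩
  rcases mem_ball.1 hx with h | h | ⟨z, h1, h2⟩
  · exact absurd h hxv
  · refine ⟨.cons (show (colorGraph c i).Adj v x from And.intro (Ne.symm hxv) h) .nil, by simp, ?_⟩
    intro z hz
    simp only [SimpleGraph.Walk.support_cons, SimpleGraph.Walk.support_nil,
      List.mem_cons, List.mem_singleton] at hz
    rcases hz with rfl | rfl | h'
    · exact hv
    · exact hx
    · exact absurd h' List.not_mem_nil
  · by_cases hzv : z = v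
    · subst hzv
      refine ⟨.cons (show (colorGraph c i).Adj z x from And.intro (Ne.symm hxv) h2) .nil, by simp, ?_⟩
      intro w hw
      simp only [SimpleGraph.Walk.support_cons, SimpleGraph.Walk.support_nil,
        List.mem_cons, List.mem_singleton] at hw
      rcases hw with rfl | rfl | h'
      · exact hv
      · exact hx
      · exact absurd h' List.not_mem_nil
    by_cases hzx : z = x
    · subst hzx
      refine ⟨.cons (show (colorGraph c i).Adj v z from And.intro (Ne.symm hxv) h1) .nil, by simp, ?_⟩
      intro w hw
      simp only [SimpleGraph.Walk.support_cons, SimpleGraph.Walk.support_nil,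
        List.mem_cons, List.mem_singleton] at hw
      rcases hw with rfl | rfl | h'
      · exact hv
      · exact hx
      · exact absurd h' List.not_mem_nil
    · refine ⟨.cons (show (colorGraph c i).Adj v z from And.intro (Ne.symm hzv) h1) (.cons (show (colorGraph c i).Adj z x from And.intro hzx h2) .nil), by simp, ?_⟩
      intro w hw
      simp only [SimpleGraph.Walk.support_cons, SimpleGraph.Walk.support_nil,
        List.mem_cons, List.mem_singleton] at hw
      rcases hw with rfl | rfl | rfl | h'
      · exact hv
      · exact mem_ball_of_edge h1
      · exact hx
      · exact absurd h' List.not_mem_nil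

lemma key (c : Sym2 (Fin n) → Fin 3) (hcon : ∀ i v, 2 * (ball c i v).card < n)
    (v u : Fin n) (i j : Fin 3) (hij : i ≠ j) (hi : i ≠ 2) (hj : j ≠ 2) :
    4 * (Finset.univ.filter fun z =>
        z ≠ u ∧ z ≠ v ∧ c s(v, z) = i ∧ c s(z, u) = j).card + 3 ≤ n := by
  set Z := Finset.univ.filter (fun z =>
      z ≠ u ∧ z ≠ v ∧ c s(v, z) = i ∧ c s(z, u) = j) with hZdef
  have hn3 : 3 ≤ n := by
    have h1 : 1 ≤ (ball c i v).card := Finset.card_pos.2 ⟨v, self_mem_ball⟩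
    have := hcon i v
    omega
  have hzi : Z ⊆ ball c i v := by
    intro z hz
    simp only [hZdef, Finset.mem_filter, Finset.mem_univ, true_and] at hz
    exact mem_ball_of_edge hz.2.2.1
  have hzj : Z ⊆ ball c j u := by
    intro z hz
    simp only [hZdef, Finset.mem_filter, Finset.mem_univ, true_and] at hz
    exact mem_ball_of_edge (by rw [Sym2.eq_swap]; exact hz.2.2.2)
  rcases Z.eq_empty_or_nonempty with hE | ⟨z0, hz0⟩
  · rw [hE]; simp; omega
  · set F := (ball c i v ∪ ball c j u)ᶜ with hFdef
    have hFne : F.Nonempty := by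
      rw [← Finset.card_pos, hFdef, Finset.card_compl]
      have h1 := Finset.card_union_le (ball c i v) (ball c j u)
      have h2 := hcon i v
      have h3 := hcon j u
      simp only [Fintype.card_fin]
      omega
    have tri : ∀ x a b : Fin 3, a ≠ b → a ≠ 2 → b ≠ 2 → x ≠ a → x ≠ b → x = 2 := by decide
    have hFcol : ∀ w ∈ F, ∀ z ∈ Z, c s(z, w) = 2 := by
      intro w hw z hz
      rw [hFdef, Finset.mem_compl, Finset.mem_union] at hw
      push_neg at hw
      simp only [hZdef, Finset.mem_filter, Finset.mem_univ, true_and] at hz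
      refine tri _ i j hij hi hj ?_ ?_
      · intro hcol; exact hw.1 (mem_ball_of_two hz.2.2.1 hcol)
      · intro hcol
        exact hw.2 (mem_ball_of_two (show c s(u, z) = j by
          rw [Sym2.eq_swap]; exact hz.2.2.2) hcol)
    obtain ⟨w0, hw0⟩ := hFne
    have hsub : Z ∪ F ⊆ ball c 2 z0 := by
      intro x hx
      rcases Finset.mem_union.1 hx with hx | hx
      · by_cases hxz : x = z0
        · subst hxz; exact self_mem_ball
        · refine mem_ball_of_two (hFcol w0 hw0 z0 hz0) ?_
          rw [Sym2.eq_swap]; exact hFcol w0 hw0 x hx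
      · exact mem_ball_of_edge (hFcol x hx z0 hz0)
    have hdisj : Disjoint Z F := by
      rw [hFdef]
      exact Disjoint.mono_left (hzi.trans Finset.subset_union_left)
        disjoint_compl_right
    have hcZF : Z.card + F.card ≤ (ball c 2 z0).card := by
      rw [← Finset.card_union_of_disjoint hdisj]
      exact Finset.card_le_card hsub
    have hIcard : Z.card ≤ ((ball c i v) ∩ (ball c j u)).card :=
      Finset.card_le_card (Finset.subset_inter hzi hzj)
    have hUF : (ball c i v ∪ ball c j u).card + F.card = n := by
      have h1 : (ball c i v ∪ ball c j u).card ≤ n := by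
        have := Finset.card_le_univ (ball c i v ∪ ball c j u)
        simpa using this
      rw [hFdef, Finset.card_compl]
      simp only [Fintype.card_fin]
      omega
    have hUI := Finset.card_union_add_card_inter (ball c i v) (ball c j u)
    have h1 := hcon i v
    have h2 := hcon j u
    have h3 := hcon 2 z0
    omega

lemma exists_big_ball (c : Sym2 (Fin n) → Fin 3) (hn : 0 < n) :
    ∃ i v, n ≤ 2 * (ball c i v).card := by
  by_contra hcon
  push_neg at hcon
  have tri : ∀ x : Fin 3, x = 0 ∨ x = 1 ∨ x = 2 := by decide
  set v : Fin n := ⟨0, hn⟩ with hvdef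
  have hcard_u : ((ball c 0 v ∪ ball c 1 v)ᶜ).Nonempty := by
    rw [← Finset.card_pos, Finset.card_compl]
    have h1 := Finset.card_union_le (ball c 0 v) (ball c 1 v)
    have h2 := hcon 0 v
    have h3 := hcon 1 v
    simp only [Fintype.card_fin]
    omega
  obtain ⟨u, hu⟩ := hcard_u
  rw [Finset.mem_compl, Finset.mem_union] at hu
  push_neg at hu
  obtain ⟨hu0, hu1⟩ := hu
  have huv : u ≠ v := fun h => hu0 (h ▸ self_mem_ball)
  have hvu2 : c s(v, u) = 2 := by
    rcases tri (c s(v, u)) with h | h | h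
    · exact absurd (mem_ball_of_edge h) hu0
    · exact absurd (mem_ball_of_edge h) hu1
    · exact h
  have ka := key c hcon v u 0 1 (by decide) (by decide) (by decide)
  have kb := key c hcon v u 1 0 (by decide) (by decide) (by decide)
  set Z01 := Finset.univ.filter (fun z =>
      z ≠ u ∧ z ≠ v ∧ c s(v, z) = 0 ∧ c s(z, u) = 1) with hZ01
  set Z10 := Finset.univ.filter (fun z =>
      z ≠ u ∧ z ≠ v ∧ c s(v, z) = 1 ∧ c s(z, u) = 0) with hZ10
  set U2 : Finset (Fin n) := insert u (insert v (Z01 ∪ Z10)) with hU2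
  set R : Finset (Fin n) := U2ᶜ with hR
  have hRball : R ⊆ ball c 2 v := by
    intro z hz
    rw [hR, Finset.mem_compl] at hz
    simp only [hU2, Finset.mem_insert, Finset.mem_union, hZ01, hZ10,
      Finset.mem_filter, Finset.mem_univ, true_and] at hz
    push_neg at hz
    obtain ⟨hzu, hzv, hz01, hz10⟩ := hz
    rcases tri (c s(v, z)) with h | h | h
    · rcases tri (c s(z, u)) with g | g | g
      · exact absurd (mem_ball_of_two h g) hu0
      · exact absurd (hz01 hzu hzv h) (fun h' => h' g)
      · exact mem_ball_of_two hvu2 (by rw [Sym2.eq_swap]; exact g)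
    · rcases tri (c s(z, u)) with g | g | g
      · exact absurd (hz10 hzu hzv h) (fun h' => h' g)
      · exact absurd (mem_ball_of_two h g) hu1
      · exact mem_ball_of_two hvu2 (by rw [Sym2.eq_swap]; exact g)
    · exact mem_ball_of_edge h
  have hcardU2 : U2.card ≤ 2 + Z01.card + Z10.card := by
    calc U2.card ≤ (insert v (Z01 ∪ Z10)).card + 1 := Finset.card_insert_le _ _
    _ ≤ (Z01 ∪ Z10).card + 1 + 1 := by
        have := Finset.card_insert_le v (Z01 ∪ Z10); omega
    _ ≤ Z01.card + Z10.card + 2 := by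
        have := Finset.card_union_le Z01 Z10; omega
    _ = 2 + Z01.card + Z10.card := by omega
  have hRcard : R.card + U2.card = n := by
    have h1 : U2.card ≤ n := by
      have := Finset.card_le_univ U2; simpa using this
    rw [hR, Finset.card_compl]
    simp only [Fintype.card_fin]
    omega
  have hvnR : v ∉ R := by
    rw [hR, Finset.mem_compl]; simp [hU2]
  have hunR : u ∉ R := by
    rw [hR, Finset.mem_compl]; simp [hU2]
  have hins : insert u (insert v R) ⊆ ball c 2 v := by
    intro z hz
    rcases Finset.mem_insert.1 hz with rfl | hz
    · exact mem_ball_of_edge hvu2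
    rcases Finset.mem_insert.1 hz with rfl | hz
    · exact self_mem_ball
    · exact hRball hz
  have hcardins : (insert u (insert v R)).card = R.card + 2 := by
    rw [Finset.card_insert_of_notMem, Finset.card_insert_of_notMem hvnR]
    simp only [Finset.mem_insert]
    push_neg
    exact ⟨huv, hunR⟩
  have hle := Finset.card_le_card hins
  rw [hcardins] at hle
  have h3 := hcon 2 v
  omega

end MonoBall

/-- In every 3-edge-coloring of `K_n` there is a monochromatic connected subgraph
of diameter at most 4 on at least `n/2` vertices. -/
theorem monochromatic_diam_four_half
    (n : ℕ) (c : Sym2 (Fin n) → Fin 3) :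
    ∃ (i : Fin 3) (S : Finset (Fin n)),
      (n : ℚ) / 2 ≤ S.card ∧
      ∀ u ∈ S, ∀ v ∈ S, ∃ p : (colorGraph c i).Walk u v,
        p.length ≤ 4 ∧ ∀ x ∈ p.support, x ∈ S := by
  rcases Nat.eq_zero_or_pos n with rfl | hn
  · exact ⟨0, ∅, by simp, by simp⟩
  · obtain ⟨i, v, hcard⟩ := MonoBall.exists_big_ball c hn
    refine ⟨i, MonoBall.ball c i v, ?_, ?_⟩
    · have h : (n : ℚ) ≤ 2 * ((MonoBall.ball c i v).card : ℚ) := by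
        exact_mod_cast hcard
      linarith
    · intro x hx y hy
      obtain ⟨p, hp, hps⟩ := MonoBall.ball_walk hx
      obtain ⟨q, hq, hqs⟩ := MonoBall.ball_walk hy
      refine ⟨p.reverse.append q, ?_, ?_⟩
      · rw [SimpleGraph.Walk.length_append, SimpleGraph.Walk.length_reverse]
        omega
      · intro z hz
        rw [SimpleGraph.Walk.mem_support_append_iff] at hz
        rcases hz with hz | hz
        · rw [SimpleGraph.Walk.support_reverse, List.mem_reverse] at hz
          exact hps z hz
        · exact hqs z hz
end

section
/- Let a 3-edge-coloring of the complete graph K_n on n vertices be given. If some color class fails to be a spanning connected subgraph (i.e., there exist two vertices not joined by any path in that color class), then one of the other two color classes contains a monochromatic double star on at least n/2 vertices. -/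
/-- The vertex set of the double star in color `i` centered at `u` and `v`:
`u`, `v`, and all vertices joined to `u` or to `v` by an edge of color `i`. -/
def doubleStar {n r : ℕ} (c : Sym2 (Fin n) → Fin r) (i : Fin r) (u v : Fin n) :
    Finset (Fin n) :=
  Finset.univ.filter (fun w =>
    w = u ∨ w = v ∨ (w ≠ u ∧ c s(u, w) = i) ∨ (w ≠ v ∧ c s(v, w) = i))

open Finset

private lemma exists_good_edge {α : Type*} [DecidableEq α] (A B : Finset α)
    (P : α → α → Prop) [DecidableRel P]
    (he : 0 < ∑ a ∈ A, ((B.filter (fun b => P a b)).card : ℚ)) :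
    ∃ a ∈ A, ∃ b ∈ B, P a b ∧
      (∑ x ∈ A, ((B.filter (fun y => P x y)).card : ℚ)) / A.card
        + (∑ x ∈ A, ((B.filter (fun y => P x y)).card : ℚ)) / B.card
        ≤ ((B.filter (fun y => P a y)).card : ℚ) + ((A.filter (fun x => P x b)).card : ℚ) := by
  set dA : α → ℚ := fun a => ((B.filter (fun y => P a y)).card : ℚ) with hdA
  set dB : α → ℚ := fun b => ((A.filter (fun x => P x b)).card : ℚ) with hdB
  set e : ℚ := ∑ x ∈ A, dA x with hee
  have hdA0 : ∀ a, 0 ≤ dA a := fun a => by positivity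
  have hApos : (0:ℚ) < A.card := by
    rcases A.eq_empty_or_nonempty with rfl | hA
    · simp [hee] at he
    · exact_mod_cast Nat.cast_pos.mpr (card_pos.mpr hA)
  have hBpos : (0:ℚ) < B.card := by
    rcases B.eq_empty_or_nonempty with rfl | hB
    · simp [hee, hdA] at he
    · exact_mod_cast Nat.cast_pos.mpr (card_pos.mpr hB)
  set S : Finset (α × α) := (A ×ˢ B).filter (fun p => P p.1 p.2) with hS
  have hcard : (S.card : ℚ) = e := by
    rw [hee]
    push_cast [hS, card_filter, Finset.sum_product]
    refine Finset.sum_congr rfl fun a _ => ?_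
    rw [hdA]
    push_cast [card_filter]
    rfl
  have h1 : ∑ p ∈ S, dA p.1 = ∑ a ∈ A, dA a * dA a := by
    rw [hS, sum_filter, Finset.sum_product]
    refine Finset.sum_congr rfl fun a _ => ?_
    rw [← sum_filter]
    show ∑ _y ∈ B.filter (fun y => P a y), dA a = dA a * dA a
    rw [sum_const, nsmul_eq_mul, hdA, mul_comm]
  have h2 : ∑ p ∈ S, dB p.2 = ∑ b ∈ B, dB b * dB b := by
    rw [hS, sum_filter, Finset.sum_product, Finset.sum_comm]
    refine Finset.sum_congr rfl fun b _ => ?_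
    rw [← sum_filter]
    show ∑ _x ∈ A.filter (fun x => P x b), dB b = dB b * dB b
    rw [sum_const, nsmul_eq_mul, hdB, mul_comm]
  have hCS1 : e ^ 2 / A.card ≤ ∑ a ∈ A, dA a * dA a := by
    rw [div_le_iff₀ hApos]
    have := sq_sum_le_card_mul_sum_sq (s := A) (f := dA)
    simp_rw [pow_two] at this ⊢
    calc e * e = (∑ x ∈ A, dA x) * (∑ x ∈ A, dA x) := by rw [hee]
      _ ≤ (A.card : ℚ) * ∑ a ∈ A, dA a * dA a := this
      _ = (∑ a ∈ A, dA a * dA a) * A.card := by ring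
  have heB : e = ∑ y ∈ B, dB y := by
    rw [hee, hdA, hdB]
    push_cast [card_filter]
    rw [Finset.sum_comm]
  have hCS2 : e ^ 2 / B.card ≤ ∑ b ∈ B, dB b * dB b := by
    rw [div_le_iff₀ hBpos]
    have := sq_sum_le_card_mul_sum_sq (s := B) (f := dB)
    simp_rw [pow_two] at this ⊢
    calc e * e = (∑ x ∈ B, dB x) * (∑ x ∈ B, dB x) := by rw [heB]
      _ ≤ (B.card : ℚ) * ∑ b ∈ B, dB b * dB b := this
      _ = (∑ b ∈ B, dB b * dB b) * B.card := by ring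
  have hSne : S.Nonempty := by
    rw [← card_pos]
    rcases Nat.eq_zero_or_pos S.card with h0 | hp
    · exfalso
      rw [h0] at hcard
      simp at hcard
      rw [← hcard] at he
      exact lt_irrefl _ he
    · exact hp
  have hmain : ∑ _p ∈ S, (e / A.card + e / B.card) ≤ ∑ p ∈ S, (dA p.1 + dB p.2) := by
    rw [sum_const, nsmul_eq_mul, hcard, Finset.sum_add_distrib, h1, h2]
    calc e * (e / A.card + e / B.card) = e ^ 2 / A.card + e ^ 2 / B.card := by ring
      _ ≤ _ := add_le_add hCS1 hCS2
  obtain ⟨p, hpS, hple⟩ := Finset.exists_le_of_sum_le hSne hmain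
  rw [hS, mem_filter, mem_product] at hpS
  exact ⟨p.1, hpS.1.1, p.2, hpS.1.2, hpS.2, hple⟩

/-- If in a 3-edge-coloring of `K_n` some color class is not spanning connected,
then one of the other two color classes contains a double star on at least `n/2`
vertices. -/
theorem double_star_of_not_connected
    (n : ℕ) (c : Sym2 (Fin n) → Fin 3) (i : Fin 3)
    (h : ∃ u v : Fin n, ¬ (colorGraph c i).Reachable u v) :
    ∃ j : Fin 3, j ≠ i ∧ ∃ u v : Fin n, u ≠ v ∧ c s(u, v) = j ∧
      (n : ℚ) / 2 ≤ (doubleStar c j u v).card := by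
  classical
  obtain ⟨u, v, huv⟩ := h
  set A : Finset (Fin n) := univ.filter (fun x => (colorGraph c i).Reachable u x) with hAdef
  set B : Finset (Fin n) := Aᶜ with hBdef
  have huA : u ∈ A := by
    simp only [hAdef, mem_filter, mem_univ, true_and]
    exact SimpleGraph.Reachable.refl u
  have hvB : v ∈ B := by simp [hBdef, hAdef]; exact huv
  have hABne : ∀ a ∈ A, ∀ b ∈ B, a ≠ b := by
    intro a ha b hb hab
    exact (mem_compl.mp hb) (hab ▸ ha)
  have hcross : ∀ a ∈ A, ∀ b ∈ B, c s(a, b) ≠ i := by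
    intro a ha b hb hc
    have hadj : (colorGraph c i).Adj a b := ⟨hABne a ha b hb, hc⟩
    refine (mem_compl.mp hb) ?_
    simp only [hAdef, mem_filter, mem_univ, true_and] at ha ⊢
    exact ha.trans hadj.reachable
  have color3 : ∀ x y : Fin 3, x ≠ y → x = y + 1 ∨ x = y + 2 := by decide
  have hne1 : (i + 1 : Fin 3) ≠ i := by
    have : ∀ y : Fin 3, y + 1 ≠ y := by decide
    exact this i
  have hne2 : (i + 2 : Fin 3) ≠ i := by
    have : ∀ y : Fin 3, y + 2 ≠ y := by decide
    exact this i
  have hne12 : (i + 1 : Fin 3) ≠ i + 2 := by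
    have : ∀ y : Fin 3, y + 1 ≠ y + 2 := by decide
    exact this i
  -- cardinalities
  have hApos : (0:ℚ) < A.card := by exact_mod_cast card_pos.mpr ⟨u, huA⟩
  have hBpos : (0:ℚ) < B.card := by exact_mod_cast card_pos.mpr ⟨v, hvB⟩
  have hABn : (A.card : ℚ) + B.card = n := by
    have := Finset.card_add_card_compl A
    rw [← hBdef] at this
    exact_mod_cast congrArg (Nat.cast : ℕ → ℚ) (this.trans (Fintype.card_fin n))
  -- the two color edge counts
  set e1 : ℚ := ∑ a ∈ A, ((B.filter (fun b => c s(a, b) = i + 1)).card : ℚ) with he1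
  set e2 : ℚ := ∑ a ∈ A, ((B.filter (fun b => c s(a, b) = i + 2)).card : ℚ) with he2
  have hsum : e1 + e2 = A.card * B.card := by
    rw [he1, he2, ← Finset.sum_add_distrib]
    have : ∀ a ∈ A, ((B.filter (fun b => c s(a, b) = i + 1)).card : ℚ)
        + ((B.filter (fun b => c s(a, b) = i + 2)).card : ℚ) = B.card := by
      intro a ha
      have hpart : (B.filter (fun b => c s(a, b) = i + 2))
          = B.filter (fun b => ¬ c s(a, b) = i + 1) := by
        apply filter_congr
        intro b hb
        constructor
        · intro h2 h1; exact hne12 (h1.symm.trans h2)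
        · intro h1
          rcases color3 _ _ (hcross a ha b hb) with hcase | hcase
          · exact absurd hcase h1
          · exact hcase
      rw [hpart]
      exact_mod_cast congrArg (Nat.cast : ℕ → ℚ)
        (Finset.card_filter_add_card_filter_not (fun b => c s(a, b) = i + 1))
    rw [Finset.sum_congr rfl this, sum_const, nsmul_eq_mul]
  -- pick the majority color
  have hmaj : ∃ m : Fin 3, m ≠ i ∧
      (A.card : ℚ) * B.card ≤ 2 * ∑ a ∈ A, ((B.filter (fun b => c s(a, b) = m)).card : ℚ) := by
    rcases le_total e1 e2 with hle | hle
    · exact ⟨i + 2, hne2, by rw [← he2]; linarith⟩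
    · exact ⟨i + 1, hne1, by rw [← he1]; linarith⟩
  obtain ⟨m, hmi, hmaj⟩ := hmaj
  set em : ℚ := ∑ a ∈ A, ((B.filter (fun b => c s(a, b) = m)).card : ℚ) with hem
  have hempos : 0 < em := by nlinarith
  obtain ⟨a, ha, b, hb, hPab, hge⟩ :=
    exists_good_edge A B (fun a b => c s(a, b) = m) hempos
  refine ⟨m, hmi, a, b, hABne a ha b hb, hPab, ?_⟩
  -- lower bound n/2 ≤ em/|A| + em/|B|
  have hhalf : (n : ℚ) / 2 ≤ em / A.card + em / B.card := by
    have h1 : (B.card : ℚ) / 2 ≤ em / A.card := by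
      rw [div_le_div_iff₀ (by norm_num) hApos]
      nlinarith
    have h2 : (A.card : ℚ) / 2 ≤ em / B.card := by
      rw [div_le_div_iff₀ (by norm_num) hBpos]
      nlinarith
    calc (n : ℚ) / 2 = B.card / 2 + A.card / 2 := by rw [← hABn]; ring
      _ ≤ _ := add_le_add h1 h2
  -- double star contains the two neighborhoods
  have hsub : (B.filter (fun y => c s(a, y) = m)) ∪ (A.filter (fun x => c s(x, b) = m))
      ⊆ doubleStar c m a b := by
    intro w hw
    simp only [doubleStar, mem_filter, mem_univ, true_and]
    rcases mem_union.mp hw with hw | hw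
    · rw [mem_filter] at hw
      exact Or.inr (Or.inr (Or.inl ⟨(hABne a ha w hw.1).symm, hw.2⟩))
    · rw [mem_filter] at hw
      refine Or.inr (Or.inr (Or.inr ⟨hABne w hw.1 b hb, ?_⟩))
      rw [Sym2.eq_swap]; exact hw.2
  have hdisj : Disjoint (B.filter (fun y => c s(a, y) = m)) (A.filter (fun x => c s(x, b) = m)) :=
    Disjoint.mono (filter_subset _ _) (filter_subset _ _)
      (by rw [hBdef]; exact disjoint_compl_left)
  have hcardsub : ((B.filter (fun y => c s(a, y) = m)).card : ℚ)
      + ((A.filter (fun x => c s(x, b) = m)).card : ℚ) ≤ (doubleStar c m a b).card := by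
    have := Finset.card_le_card hsub
    rw [Finset.card_union_of_disjoint hdisj] at this
    exact_mod_cast this
  calc (n : ℚ) / 2 ≤ em / A.card + em / B.card := hhalf
    _ ≤ _ := hge
    _ ≤ _ := hcardsub
end

section
/- For every integer r ≥ 2, in every r-edge-coloring of the complete graph K_n on n vertices there is a monochromatic connected subgraph on at least n/(r-1) vertices. -/
open Finset

open scoped Classical

/-- The connected component of `v` in the graph of color `i`, as a `Finset`. -/
noncomputable def cComp {n r : ℕ} (c : Sym2 (Fin n) → Fin r) (i : Fin r) (v : Fin n) :
    Finset (Fin n) :=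
  Finset.univ.filter fun u => (colorGraph c i).Reachable v u

namespace GyarfasAux

variable {n r : ℕ} {c : Sym2 (Fin n) → Fin r}

lemma mem_cComp {i : Fin r} {v u : Fin n} :
    u ∈ cComp c i v ↔ (colorGraph c i).Reachable v u := by
  simp [cComp]

lemma self_mem_cComp {i : Fin r} {v : Fin n} : v ∈ cComp c i v :=
  mem_cComp.2 (SimpleGraph.Reachable.refl v)

lemma cComp_eq_of_mem {i : Fin r} {v u : Fin n} (h : u ∈ cComp c i v) :
    cComp c i u = cComp c i v := by
  have hruv := mem_cComp.1 h
  ext x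
  simp only [mem_cComp]
  exact ⟨fun hx => hruv.trans hx, fun hx => hruv.symm.trans hx⟩

lemma cComp_disjoint {i : Fin r} {P Q : Finset (Fin n)}
    (hP : P ∈ Finset.univ.image (cComp c i)) (hQ : Q ∈ Finset.univ.image (cComp c i))
    (hne : P ≠ Q) : Disjoint P Q := by
  rw [Finset.disjoint_left]
  intro a haP haQ
  obtain ⟨p, -, rfl⟩ := Finset.mem_image.1 hP
  obtain ⟨q, -, rfl⟩ := Finset.mem_image.1 hQ
  exact hne ((cComp_eq_of_mem haP).symm.trans (cComp_eq_of_mem haQ))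

lemma sum_card_inter_comp (i : Fin r) (B : Finset (Fin n)) :
    ∑ P ∈ Finset.univ.image (cComp c i), (P ∩ B).card = B.card := by
  have hdisj : ∀ P ∈ Finset.univ.image (cComp c i), ∀ Q ∈ Finset.univ.image (cComp c i),
      P ≠ Q → Disjoint (P ∩ B) (Q ∩ B) := fun P hP Q hQ hne =>
    (cComp_disjoint hP hQ hne).mono Finset.inter_subset_left Finset.inter_subset_left
  have hun : (Finset.univ.image (cComp c i)).biUnion (fun P => P ∩ B) = B := by
    ext b
    simp only [Finset.mem_biUnion, Finset.mem_inter]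
    constructor
    · rintro ⟨P, -, -, hb⟩
      exact hb
    · intro hb
      exact ⟨cComp c i b, Finset.mem_image_of_mem _ (Finset.mem_univ b), self_mem_cComp, hb⟩
  calc ∑ P ∈ Finset.univ.image (cComp c i), (P ∩ B).card
      = ((Finset.univ.image (cComp c i)).biUnion (fun P => P ∩ B)).card :=
        (Finset.card_biUnion hdisj).symm
    _ = B.card := by rw [hun]

lemma card_inter_split (P A : Finset (Fin n)) :
    (P ∩ A).card + (P ∩ (Finset.univ \ A)).card = P.card := by
  have h1 : P ∩ (Finset.univ \ A) = P \ A := by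
    ext x
    simp [Finset.mem_sdiff, Finset.mem_inter]
  rw [h1]
  have := Finset.card_sdiff_add_card_inter P A
  omega

/-- Pointwise rearrangement-type inequality, asymmetric version. -/
lemma core_pointwise_aux (s a b a' b' : ℚ) (ha : 0 ≤ a) (hb : 0 ≤ b) (ha' : 0 ≤ a')
    (hb' : 0 ≤ b') (h1 : a + b ≤ s) (hzz : a' + b' ≤ a + b) :
    (a' + b') * (a * b) + (a + b) * (a' * b') ≤ s * (a * b') + s * (a' * b) := by
  have t1 : 0 ≤ (s - (a + b)) * (a * b' + a' * b) :=
    mul_nonneg (by linarith) (by positivity)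
  rcases le_total a' a with hx | hx <;> rcases le_total b' b with hy | hy
  · -- a' ≤ a, b' ≤ b
    nlinarith [mul_nonneg (mul_nonneg ha hb') (sub_nonneg.2 hx),
      mul_nonneg (mul_nonneg ha' hb) (sub_nonneg.2 hy), t1]
  · -- a' ≤ a, b ≤ b'
    have hprod : a' * b ≤ a * b' := mul_le_mul hx hy hb ha
    nlinarith [t1, mul_nonneg (sub_nonneg.2 hzz) (mul_nonneg ha hb'),
      mul_nonneg (sub_nonneg.2 hy) (sub_nonneg.2 hprod)]
  · -- a ≤ a', b' ≤ b
    have hprod : a * b' ≤ a' * b := mul_le_mul hx hy hb' ha'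
    nlinarith [t1, mul_nonneg (sub_nonneg.2 hzz) (mul_nonneg ha' hb),
      mul_nonneg (sub_nonneg.2 hx) (sub_nonneg.2 hprod)]
  · -- a ≤ a', b ≤ b' : forces a = a', b = b'
    have hea : a = a' := le_antisymm hx (by linarith)
    have heb : b = b' := le_antisymm hy (by linarith)
    subst hea; subst heb
    nlinarith [t1]

lemma core_pointwise (s a b a' b' : ℚ) (ha : 0 ≤ a) (hb : 0 ≤ b) (ha' : 0 ≤ a')
    (hb' : 0 ≤ b') (h1 : a + b ≤ s) (h2 : a' + b' ≤ s) :
    (a' + b') * (a * b) + (a + b) * (a' * b') ≤ s * (a * b') + s * (a' * b) := by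
  rcases le_total (a' + b') (a + b) with hzz | hzz
  · exact core_pointwise_aux s a b a' b' ha hb ha' hb' h1 hzz
  · have := core_pointwise_aux s a' b' a b ha' hb' ha hb h2 hzz
    linarith

/-- Key convexity inequality: for nonnegative `x_P, y_P` with `x_P + y_P ≤ s`,
`(∑ (x+y)) * ∑ x*y ≤ s * (∑x * ∑y)`. -/
lemma core_sum {ι : Type*} (Ps : Finset ι) (x y : ι → ℚ) (s : ℚ)
    (hx : ∀ P ∈ Ps, 0 ≤ x P) (hy : ∀ P ∈ Ps, 0 ≤ y P)
    (hz : ∀ P ∈ Ps, x P + y P ≤ s) :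
    (∑ P ∈ Ps, (x P + y P)) * (∑ P ∈ Ps, x P * y P)
      ≤ s * ((∑ P ∈ Ps, x P) * (∑ P ∈ Ps, y P)) := by
  have key : ∑ P ∈ Ps, ∑ Q ∈ Ps, ((x Q + y Q) * (x P * y P) + (x P + y P) * (x Q * y Q))
      ≤ ∑ P ∈ Ps, ∑ Q ∈ Ps, (s * (x P * y Q) + s * (x Q * y P)) :=
    Finset.sum_le_sum fun P hP => Finset.sum_le_sum fun Q hQ =>
      core_pointwise s (x P) (y P) (x Q) (y Q) (hx P hP) (hy P hP) (hx Q hQ) (hy Q hQ)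
        (hz P hP) (hz Q hQ)
  have e1 : ∑ P ∈ Ps, ∑ Q ∈ Ps, ((x Q + y Q) * (x P * y P) + (x P + y P) * (x Q * y Q))
      = 2 * ((∑ P ∈ Ps, (x P + y P)) * (∑ P ∈ Ps, x P * y P)) := by
    rw [Finset.sum_mul_sum]
    simp only [Finset.sum_add_distrib]
    rw [Finset.sum_comm (s := Ps) (t := Ps)
      (f := fun P Q => (x Q + y Q) * (x P * y P))]
    ring
  have h2 : ∑ P ∈ Ps, ∑ Q ∈ Ps, s * (x P * y Q)
      = s * ((∑ P ∈ Ps, x P) * (∑ P ∈ Ps, y P)) := by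
    calc ∑ P ∈ Ps, ∑ Q ∈ Ps, s * (x P * y Q)
        = ∑ P ∈ Ps, s * (x P * ∑ Q ∈ Ps, y Q) :=
          Finset.sum_congr rfl fun P _ => by rw [← Finset.mul_sum, ← Finset.mul_sum]
      _ = s * ∑ P ∈ Ps, (x P * ∑ Q ∈ Ps, y Q) := by rw [← Finset.mul_sum]
      _ = s * ((∑ P ∈ Ps, x P) * (∑ P ∈ Ps, y P)) := by rw [← Finset.sum_mul]
  have h3 : ∑ P ∈ Ps, ∑ Q ∈ Ps, s * (x Q * y P)
      = s * ((∑ P ∈ Ps, x P) * (∑ P ∈ Ps, y P)) := by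
    calc ∑ P ∈ Ps, ∑ Q ∈ Ps, s * (x Q * y P)
        = ∑ P ∈ Ps, s * ((∑ Q ∈ Ps, x Q) * y P) :=
          Finset.sum_congr rfl fun P _ => by rw [← Finset.mul_sum, ← Finset.sum_mul]
      _ = s * ∑ P ∈ Ps, ((∑ Q ∈ Ps, x Q) * y P) := by rw [← Finset.mul_sum]
      _ = s * ((∑ P ∈ Ps, x P) * (∑ P ∈ Ps, y P)) := by rw [← Finset.mul_sum]
  have e2 : ∑ P ∈ Ps, ∑ Q ∈ Ps, (s * (x P * y Q) + s * (x Q * y P))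
      = 2 * (s * ((∑ P ∈ Ps, x P) * (∑ P ∈ Ps, y P))) := by
    simp only [Finset.sum_add_distrib]
    rw [h2, h3]
    ring
  rw [e1, e2] at key
  linarith

end GyarfasAux

open GyarfasAux

/-- For `r ≥ 2`, every `r`-edge-coloring of `K_n` contains a monochromatic
connected subgraph on at least `n/(r-1)` vertices. -/
theorem monochromatic_component_gyarfas
    (n r : ℕ) (hr : 2 ≤ r) (c : Sym2 (Fin n) → Fin r) :
    ∃ (i : Fin r) (S : Finset (Fin n)),
      (n : ℚ) / ((r : ℚ) - 1) ≤ S.card ∧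
      ∀ u ∈ S, ∀ v ∈ S, ∃ p : (colorGraph c i).Walk u v, ∀ x ∈ p.support, x ∈ S := by
  have hrpos : 0 < r := by omega
  have hrq : (2 : ℚ) ≤ (r : ℚ) := by exact_mod_cast hr
  rcases Nat.eq_zero_or_pos n with hn | hn
  · refine ⟨⟨0, hrpos⟩, ∅, ?_, ?_⟩
    · rw [hn]; simp
    · intro u hu; exact absurd hu (Finset.notMem_empty u)
  · obtain ⟨p₀, -, hmax⟩ := Finset.exists_max_image (Finset.univ : Finset (Fin r × Fin n))
      (fun p => (cComp c p.1 p.2).card) ⟨(⟨0, hrpos⟩, ⟨0, hn⟩), Finset.mem_univ _⟩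
    obtain ⟨i₀, v₀⟩ := p₀
    have hmax' : ∀ (i : Fin r) (v : Fin n), (cComp c i v).card ≤ (cComp c i₀ v₀).card :=
      fun i v => hmax (i, v) (Finset.mem_univ _)
    refine ⟨i₀, cComp c i₀ v₀, ?_, ?_⟩
    · -- the cardinality bound
      rw [div_le_iff₀ (by linarith : (0:ℚ) < (r:ℚ) - 1)]
      suffices hkey : (n : ℚ) ≤ ((r : ℚ) - 1) * ((cComp c i₀ v₀).card : ℚ) by linarith
      set s : ℕ := (cComp c i₀ v₀).card with hs
      have hsq : (0:ℚ) ≤ (s : ℚ) := Nat.cast_nonneg s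
      set j₀ : Fin r := ⟨0, hrpos⟩ with hj₀
      set w₀ : Fin n := ⟨0, hn⟩ with hw₀
      set A : Finset (Fin n) := cComp c j₀ w₀ with hA
      by_cases hAuniv : A = Finset.univ
      · have hcard : (A.card : ℚ) ≤ (s : ℚ) := by exact_mod_cast hmax' j₀ w₀
        have hAn : A.card = n := by rw [hAuniv, Finset.card_univ, Fintype.card_fin]
        rw [hAn] at hcard
        nlinarith
      · set A' : Finset (Fin n) := Finset.univ \ A with hA'
        have hA'ne : A'.Nonempty := by
          rw [hA', Finset.sdiff_nonempty]
          intro hsub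
          exact hAuniv ((Finset.univ_subset_iff.1 hsub))
        set Rs : Fin r → Finset (Fin n × Fin n) := fun i =>
          (Finset.univ.image (cComp c i)).biUnion (fun P => (P ∩ A) ×ˢ (P ∩ A')) with hRs
        have hRdisj : ∀ i : Fin r, ∀ P ∈ Finset.univ.image (cComp c i),
            ∀ Q ∈ Finset.univ.image (cComp c i), P ≠ Q →
            Disjoint ((P ∩ A) ×ˢ (P ∩ A')) ((Q ∩ A) ×ˢ (Q ∩ A')) := by
          intro i P hP Q hQ hne
          rw [Finset.disjoint_left]
          rintro ⟨u, v⟩ h1 h2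
          rw [Finset.mem_product] at h1 h2
          exact (Finset.disjoint_left.1 (cComp_disjoint hP hQ hne))
            (Finset.mem_inter.1 h1.1).1 (Finset.mem_inter.1 h2.1).1
        have hRcard : ∀ i : Fin r, (Rs i).card
            = ∑ P ∈ Finset.univ.image (cComp c i), (P ∩ A).card * (P ∩ A').card := by
          intro i
          rw [hRs]
          rw [Finset.card_biUnion (hRdisj i)]
          exact Finset.sum_congr rfl fun P _ => Finset.card_product _ _
        -- each cross pair is covered by some color other than j₀
        have hcover : A.card * A'.card ≤ ∑ i ∈ Finset.univ.erase j₀, (Rs i).card := by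
          have hsub : A ×ˢ A' ⊆ (Finset.univ.erase j₀).biUnion Rs := by
            rintro ⟨u, v⟩ huv
            rw [Finset.mem_product] at huv
            obtain ⟨hu, hv⟩ := huv
            have hvA : v ∉ A := (Finset.mem_sdiff.1 hv).2
            have hne : u ≠ v := fun h => hvA (h ▸ hu)
            have hadj : (colorGraph c (c s(u, v))).Adj u v := ⟨hne, rfl⟩
            have hij : c s(u, v) ≠ j₀ := by
              intro h
              apply hvA
              have hadj' : (colorGraph c j₀).Adj u v := h ▸ hadj
              exact mem_cComp.2 ((mem_cComp.1 hu).trans hadj'.reachable)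
            refine Finset.mem_biUnion.2 ⟨c s(u, v), Finset.mem_erase.2 ⟨hij, Finset.mem_univ _⟩,
              Finset.mem_biUnion.2 ⟨cComp c (c s(u, v)) u,
                Finset.mem_image_of_mem _ (Finset.mem_univ u), ?_⟩⟩
            rw [Finset.mem_product]
            exact ⟨Finset.mem_inter.2 ⟨self_mem_cComp, hu⟩,
              Finset.mem_inter.2 ⟨mem_cComp.2 hadj.reachable, hv⟩⟩
          calc A.card * A'.card = (A ×ˢ A').card := (Finset.card_product _ _).symm
            _ ≤ ((Finset.univ.erase j₀).biUnion Rs).card := Finset.card_le_card hsub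
            _ ≤ ∑ i ∈ Finset.univ.erase j₀, (Rs i).card := Finset.card_biUnion_le
        -- per-color bound via the convexity lemma
        have hpercolor : ∀ i : Fin r, (n : ℚ) * ((Rs i).card : ℚ)
            ≤ (s : ℚ) * ((A.card : ℚ) * (A'.card : ℚ)) := by
          intro i
          have hsplit : ∀ P ∈ Finset.univ.image (cComp c i),
              (P ∩ A).card + (P ∩ A').card = P.card := fun P _ => card_inter_split P A
          have hzsum : ∑ P ∈ Finset.univ.image (cComp c i),
              ((P ∩ A).card + (P ∩ A').card) = n := by
            rw [Finset.sum_congr rfl hsplit]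
            have : ∀ P ∈ Finset.univ.image (cComp c i), P.card = (P ∩ Finset.univ).card := by
              intro P _
              rw [Finset.inter_univ]
            rw [Finset.sum_congr rfl this, sum_card_inter_comp]
            rw [Finset.card_univ, Fintype.card_fin]
          have hzbound : ∀ P ∈ Finset.univ.image (cComp c i),
              (P ∩ A).card + (P ∩ A').card ≤ s := by
            intro P hP
            obtain ⟨w, -, rfl⟩ := Finset.mem_image.1 hP
            rw [card_inter_split]
            exact hmax' i w
          have hcore := core_sum (Finset.univ.image (cComp c i))
            (fun P => ((P ∩ A).card : ℚ)) (fun P => ((P ∩ A').card : ℚ)) (s : ℚ)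
            (fun P _ => Nat.cast_nonneg _) (fun P _ => Nat.cast_nonneg _)
            (fun P hP => by
              show ((P ∩ A).card : ℚ) + ((P ∩ A').card : ℚ) ≤ (s : ℚ)
              exact_mod_cast hzbound P hP)
          have ez : ∑ P ∈ Finset.univ.image (cComp c i),
              (((P ∩ A).card : ℚ) + ((P ∩ A').card : ℚ)) = (n : ℚ) := by
            have : ∑ P ∈ Finset.univ.image (cComp c i),
                (((P ∩ A).card : ℚ) + ((P ∩ A').card : ℚ))
                = ((∑ P ∈ Finset.univ.image (cComp c i),
                    ((P ∩ A).card + (P ∩ A').card) : ℕ) : ℚ) := by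
              push_cast
              rfl
            rw [this, hzsum]
          have ex : ∑ P ∈ Finset.univ.image (cComp c i), ((P ∩ A).card : ℚ)
              = (A.card : ℚ) := by
            rw [← Nat.cast_sum, sum_card_inter_comp]
          have ey : ∑ P ∈ Finset.univ.image (cComp c i), ((P ∩ A').card : ℚ)
              = (A'.card : ℚ) := by
            rw [← Nat.cast_sum, sum_card_inter_comp]
          have ew : ∑ P ∈ Finset.univ.image (cComp c i),
              (((P ∩ A).card : ℚ) * ((P ∩ A').card : ℚ)) = ((Rs i).card : ℚ) := by
            rw [hRcard i]
            push_cast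
            rfl
          rw [ez, ex, ey, ew] at hcore
          exact hcore
        -- put everything together
        have hcoverq : ((A.card : ℚ) * (A'.card : ℚ))
            ≤ ∑ i ∈ Finset.univ.erase j₀, ((Rs i).card : ℚ) := by
          have := (Nat.cast_le (α := ℚ)).2 hcover
          push_cast at this
          exact this
        have hcardsz : ((Finset.univ.erase j₀).card : ℚ) = (r : ℚ) - 1 := by
          rw [Finset.card_erase_of_mem (Finset.mem_univ _), Finset.card_univ, Fintype.card_fin]
          have h1r : 1 ≤ r := by omega
          push_cast [Nat.cast_sub h1r]
          ring
        have htotal : (n : ℚ) * ((A.card : ℚ) * (A'.card : ℚ))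
            ≤ (((r : ℚ) - 1) * (s : ℚ)) * ((A.card : ℚ) * (A'.card : ℚ)) := by
          calc (n : ℚ) * ((A.card : ℚ) * (A'.card : ℚ))
              ≤ (n : ℚ) * (∑ i ∈ Finset.univ.erase j₀, ((Rs i).card : ℚ)) :=
                mul_le_mul_of_nonneg_left hcoverq (Nat.cast_nonneg n)
            _ = ∑ i ∈ Finset.univ.erase j₀, (n : ℚ) * ((Rs i).card : ℚ) :=
                Finset.mul_sum _ _ _
            _ ≤ ∑ _i ∈ Finset.univ.erase j₀, (s : ℚ) * ((A.card : ℚ) * (A'.card : ℚ)) :=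
                Finset.sum_le_sum fun i _ => hpercolor i
            _ = ((Finset.univ.erase j₀).card : ℚ) * ((s : ℚ) * ((A.card : ℚ) * (A'.card : ℚ))) := by
                rw [Finset.sum_const, nsmul_eq_mul]
            _ = (((r : ℚ) - 1) * (s : ℚ)) * ((A.card : ℚ) * (A'.card : ℚ)) := by
                rw [hcardsz]; ring
        have hApos : (0:ℚ) < (A.card : ℚ) := by
          have : 0 < A.card := Finset.card_pos.2 ⟨w₀, self_mem_cComp⟩
          exact_mod_cast this
        have hA'pos : (0:ℚ) < (A'.card : ℚ) := by
          have : 0 < A'.card := Finset.card_pos.2 hA'ne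
          exact_mod_cast this
        have := le_of_mul_le_mul_right htotal (mul_pos hApos hA'pos)
        linarith
    · -- connectivity within the component
      intro u hu v hv
      have hru : (colorGraph c i₀).Reachable v₀ u := mem_cComp.1 hu
      have hrv : (colorGraph c i₀).Reachable v₀ v := mem_cComp.1 hv
      obtain ⟨p⟩ := hru.symm.trans hrv
      refine ⟨p, fun x hx => ?_⟩
      exact mem_cComp.2 (hru.trans ⟨p.takeUntil x hx⟩)
end

section
/- For all positive integers k, ℓ, r, in every r-edge-coloring of the complete bipartite graph K_{k,ℓ} there is a monochromatic double star of order at least (k+ℓ)/r. -/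
open Finset

/-- Mubayi's theorem: for positive integers `k`, `ℓ`, `r`, every `r`-edge-coloring
of the complete bipartite graph `K_{k,ℓ}` (colored by `c : Fin k → Fin ℓ → Fin r`)
contains a monochromatic double star of order at least `(k+ℓ)/r`; the double star
in color `i` centered at the edge `uv` consists of `u`, `v`, and all vertices joined
to `u` or to `v` by an edge of color `i`. -/
theorem bipartite_monochromatic_double_star_mubayi
    (k l r : ℕ) (hk : 1 ≤ k) (hl : 1 ≤ l) (hr : 1 ≤ r)
    (c : Fin k → Fin l → Fin r) :
    ∃ (i : Fin r) (u : Fin k) (v : Fin l), c u v = i ∧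
      ((k : ℚ) + (l : ℚ)) / (r : ℚ) ≤
        (Finset.univ.filter (fun x : Fin k => x = u ∨ c x v = i)).card +
        (Finset.univ.filter (fun y : Fin l => y = v ∨ c u y = i)).card := by
  classical
  set d : Fin r → Fin l → ℚ :=
    fun i v => ((univ.filter (fun x : Fin k => c x v = i)).card : ℚ) with hd
  set e : Fin r → Fin k → ℚ :=
    fun i u => ((univ.filter (fun y : Fin l => c u y = i)).card : ℚ) with he
  have hrQ : (0 : ℚ) < r := by exact_mod_cast hr
  have hdsum : ∀ v : Fin l, ∑ i : Fin r, d i v = (k : ℚ) := by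
    intro v
    have : ∑ i : Fin r, (univ.filter (fun x : Fin k => c x v = i)).card
        = (univ : Finset (Fin k)).card :=
      (Finset.card_eq_sum_card_fiberwise (fun x _ => Finset.mem_univ _)).symm
    rw [Finset.card_univ, Fintype.card_fin] at this
    simp only [hd]
    exact_mod_cast this
  have hesum : ∀ u : Fin k, ∑ i : Fin r, e i u = (l : ℚ) := by
    intro u
    have : ∑ i : Fin r, (univ.filter (fun y : Fin l => c u y = i)).card
        = (univ : Finset (Fin l)).card :=
      (Finset.card_eq_sum_card_fiberwise (fun y _ => Finset.mem_univ _)).symm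
    rw [Finset.card_univ, Fintype.card_fin] at this
    simp only [he]
    exact_mod_cast this
  have hCS1 : ∀ v : Fin l, (k : ℚ)^2 / r ≤ ∑ i : Fin r, (d i v)^2 := by
    intro v
    rw [div_le_iff₀ hrQ]
    have := sq_sum_le_card_mul_sum_sq (s := (univ : Finset (Fin r)))
      (f := fun i => d i v)
    rw [hdsum v] at this
    simpa [Finset.card_univ, mul_comm] using this
  have hCS2 : ∀ u : Fin k, (l : ℚ)^2 / r ≤ ∑ i : Fin r, (e i u)^2 := by
    intro u
    rw [div_le_iff₀ hrQ]
    have := sq_sum_le_card_mul_sum_sq (s := (univ : Finset (Fin r)))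
      (f := fun i => e i u)
    rw [hesum u] at this
    simpa [Finset.card_univ, mul_comm] using this
  have hA : ∀ v : Fin l, ∑ u : Fin k, d (c u v) v = ∑ i : Fin r, (d i v)^2 := by
    intro v
    rw [← Finset.sum_fiberwise univ (fun u : Fin k => c u v) (fun u => d (c u v) v)]
    refine Finset.sum_congr rfl fun i _ => ?_
    have h1 : ∑ u ∈ univ.filter (fun u : Fin k => c u v = i), d (c u v) v
        = ∑ u ∈ univ.filter (fun u : Fin k => c u v = i), d i v :=
      Finset.sum_congr rfl fun u hu => by rw [(Finset.mem_filter.mp hu).2]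
    rw [h1, Finset.sum_const, nsmul_eq_mul, sq, hd]
  have hB : ∀ u : Fin k, ∑ v : Fin l, e (c u v) u = ∑ i : Fin r, (e i u)^2 := by
    intro u
    rw [← Finset.sum_fiberwise univ (fun v : Fin l => c u v) (fun v => e (c u v) u)]
    refine Finset.sum_congr rfl fun i _ => ?_
    have h1 : ∑ v ∈ univ.filter (fun v : Fin l => c u v = i), e (c u v) u
        = ∑ v ∈ univ.filter (fun v : Fin l => c u v = i), e i u :=
      Finset.sum_congr rfl fun v hv => by rw [(Finset.mem_filter.mp hv).2]
    rw [h1, Finset.sum_const, nsmul_eq_mul, sq, he]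
  have htotal : (k : ℚ) * l * (((k:ℚ) + l) / r) ≤
      ∑ p : Fin k × Fin l, (d (c p.1 p.2) p.2 + e (c p.1 p.2) p.1) := by
    have h1 : (l : ℚ) * ((k:ℚ)^2 / r) ≤ ∑ p : Fin k × Fin l, d (c p.1 p.2) p.2 := by
      rw [Fintype.sum_prod_type_right]
      calc (l : ℚ) * ((k:ℚ)^2 / r) = ∑ _v : Fin l, (k:ℚ)^2/r := by
            simp [Finset.sum_const, Finset.card_univ, nsmul_eq_mul]
        _ ≤ ∑ v : Fin l, ∑ u : Fin k, d (c u v) v :=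
            Finset.sum_le_sum fun v _ => (hCS1 v).trans_eq (hA v).symm
    have h2 : (k : ℚ) * ((l:ℚ)^2 / r) ≤ ∑ p : Fin k × Fin l, e (c p.1 p.2) p.1 := by
      rw [Fintype.sum_prod_type]
      calc (k : ℚ) * ((l:ℚ)^2 / r) = ∑ _u : Fin k, (l:ℚ)^2/r := by
            simp [Finset.sum_const, Finset.card_univ, nsmul_eq_mul]
        _ ≤ ∑ u : Fin k, ∑ v : Fin l, e (c u v) u :=
            Finset.sum_le_sum fun u _ => (hCS2 u).trans_eq (hB u).symm
    calc (k : ℚ) * l * (((k:ℚ) + l) / r)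
        = (l : ℚ) * ((k:ℚ)^2 / r) + (k : ℚ) * ((l:ℚ)^2 / r) := by ring
      _ ≤ _ := by rw [Finset.sum_add_distrib]; exact add_le_add h1 h2
  have : Nonempty (Fin k × Fin l) := ⟨(⟨0, hk⟩, ⟨0, hl⟩)⟩
  have hne : (Finset.univ : Finset (Fin k × Fin l)).Nonempty := Finset.univ_nonempty
  obtain ⟨p, _, hp⟩ := Finset.exists_le_of_sum_le hne (by
    calc ∑ _p : Fin k × Fin l, ((k:ℚ) + l)/r
        = (k : ℚ) * l * (((k:ℚ) + l) / r) := by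
          simp [Finset.sum_const, Finset.card_univ, nsmul_eq_mul]
          try ring
      _ ≤ _ := htotal)
  obtain ⟨u, v⟩ := p
  refine ⟨c u v, u, v, rfl, ?_⟩
  refine hp.trans (add_le_add ?_ ?_)
  · rw [hd]
    refine Nat.cast_le.mpr (Finset.card_le_card fun x hx => ?_)
    rw [Finset.mem_filter] at hx ⊢
    exact ⟨hx.1, Or.inr hx.2⟩
  · rw [he]
    refine Nat.cast_le.mpr (Finset.card_le_card fun y hy => ?_)
    rw [Finset.mem_filter] at hy ⊢
    exact ⟨hy.1, Or.inr hy.2⟩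
end

section
/- For every integer r ≥ 2, in every r-edge-coloring of the complete graph K_n on n vertices there is a monochromatic connected subgraph of diameter at most 5 on at least n/(r-1) vertices. -/
namespace Ruszinko

variable {n r : ℕ}

/-- The `i`-colored neighborhood of `a`. -/
def nbr (c : Sym2 (Fin n) → Fin r) (i : Fin r) (a : Fin n) : Finset (Fin n) :=
  Finset.univ.filter fun x => a ≠ x ∧ c s(a, x) = i

/-- The ball of radius 2 around `a` in color `i`. -/
def ball2 (c : Sym2 (Fin n) → Fin r) (i : Fin r) (a : Fin n) : Finset (Fin n) :=
  Finset.univ.filter fun x =>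
    x = a ∨ (a ≠ x ∧ c s(a, x) = i) ∨ ∃ z, (a ≠ z ∧ c s(a, z) = i) ∧ z ≠ x ∧ c s(z, x) = i

/-- The "double ball" around an edge `ab`. -/
def Uset (c : Sym2 (Fin n) → Fin r) (i : Fin r) (a b : Fin n) : Finset (Fin n) :=
  ball2 c i a ∪ ball2 c i b

/-- The closed double star around an edge `ab`. -/
def Aset (c : Sym2 (Fin n) → Fin r) (i : Fin r) (a b : Fin n) : Finset (Fin n) :=
  insert a (insert b (nbr c i a ∪ nbr c i b))

lemma mem_nbr {c : Sym2 (Fin n) → Fin r} {i : Fin r} {a x : Fin n} :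
    x ∈ nbr c i a ↔ a ≠ x ∧ c s(a, x) = i := by simp [nbr]

lemma mem_ball2 {c : Sym2 (Fin n) → Fin r} {i : Fin r} {a x : Fin n} :
    x ∈ ball2 c i a ↔
      x = a ∨ (a ≠ x ∧ c s(a, x) = i) ∨
        ∃ z, (a ≠ z ∧ c s(a, z) = i) ∧ z ≠ x ∧ c s(z, x) = i := by simp [ball2]

lemma self_mem_ball2 {c : Sym2 (Fin n) → Fin r} {i : Fin r} {a : Fin n} :
    a ∈ ball2 c i a := mem_ball2.2 (Or.inl rfl)

lemma nbr_subset_ball2 {c : Sym2 (Fin n) → Fin r} {i : Fin r} {a : Fin n} :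
    nbr c i a ⊆ ball2 c i a := fun x hx => mem_ball2.2 (Or.inr (Or.inl (mem_nbr.1 hx)))

lemma Aset_subset_Uset {c : Sym2 (Fin n) → Fin r} {i : Fin r} {a b : Fin n} :
    Aset c i a b ⊆ Uset c i a b := by
  intro x hx
  simp only [Aset, Finset.mem_insert, Finset.mem_union] at hx
  rcases hx with rfl | rfl | hx | hx
  · exact Finset.mem_union_left _ self_mem_ball2
  · exact Finset.mem_union_right _ self_mem_ball2
  · exact Finset.mem_union_left _ (nbr_subset_ball2 hx)
  · exact Finset.mem_union_right _ (nbr_subset_ball2 hx)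

/-- From any vertex of a radius-2 ball there's a walk of length ≤ 2 to the center,
staying in the ball. -/
lemma walk_to_center {c : Sym2 (Fin n) → Fin r} {i : Fin r} {a x : Fin n}
    (hx : x ∈ ball2 c i a) :
    ∃ p : (colorGraph c i).Walk x a, p.length ≤ 2 ∧ ∀ y ∈ p.support, y ∈ ball2 c i a := by
  rw [mem_ball2] at hx
  rcases hx with rfl | h | ⟨z, hz, hzx⟩
  · exact ⟨SimpleGraph.Walk.nil, by simp, by simp [self_mem_ball2]⟩
  · have hadj : (colorGraph c i).Adj a x := And.intro h.1 h.2
    refine ⟨SimpleGraph.Walk.cons hadj.symm SimpleGraph.Walk.nil, by simp, ?_⟩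
    intro y hy
    simp only [SimpleGraph.Walk.support_cons, SimpleGraph.Walk.support_nil,
      List.mem_cons, List.mem_singleton] at hy
    rcases hy with rfl | rfl | h'
    · exact mem_ball2.2 (Or.inr (Or.inl h))
    · exact self_mem_ball2
    · exact absurd h' List.not_mem_nil
  · have h1 : (colorGraph c i).Adj a z := And.intro hz.1 hz.2
    have h2 : (colorGraph c i).Adj z x := And.intro hzx.1 hzx.2
    refine ⟨SimpleGraph.Walk.cons h2.symm (SimpleGraph.Walk.cons h1.symm SimpleGraph.Walk.nil),
      by simp, ?_⟩
    intro y hy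
    simp only [SimpleGraph.Walk.support_cons, SimpleGraph.Walk.support_nil,
      List.mem_cons, List.mem_singleton] at hy
    rcases hy with rfl | rfl | rfl | h'
    · exact mem_ball2.2 (Or.inr (Or.inr ⟨z, hz, hzx⟩))
    · exact nbr_subset_ball2 (mem_nbr.2 hz)
    · exact self_mem_ball2
    · exact absurd h' List.not_mem_nil

/-- The double ball around a monochromatic edge is a diameter-5 structure. -/
lemma good_Uset {c : Sym2 (Fin n) → Fin r} {i : Fin r} {a b : Fin n}
    (hne : a ≠ b) (hc : c s(a, b) = i) :
    ∀ u ∈ Uset c i a b, ∀ v ∈ Uset c i a b,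
      ∃ p : (colorGraph c i).Walk u v, p.length ≤ 5 ∧ ∀ x ∈ p.support, x ∈ Uset c i a b := by
  have hab : (colorGraph c i).Adj a b := And.intro hne hc
  intro u hu v hv
  rw [Uset, Finset.mem_union] at hu hv
  -- helper for the "same center" case
  have same : ∀ (w : Fin n), ∀ u' ∈ ball2 c i w, ∀ v' ∈ ball2 c i w,
      ball2 c i w ⊆ Uset c i a b →
      ∃ p : (colorGraph c i).Walk u' v', p.length ≤ 5 ∧ ∀ x ∈ p.support, x ∈ Uset c i a b := by
    intro w u' hu' v' hv' hsub
    obtain ⟨p, hp2, hpS⟩ := walk_to_center hu'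
    obtain ⟨q, hq2, hqS⟩ := walk_to_center hv'
    refine ⟨p.append q.reverse, ?_, ?_⟩
    · rw [SimpleGraph.Walk.length_append, SimpleGraph.Walk.length_reverse]; omega
    · intro x hx
      rw [SimpleGraph.Walk.mem_support_append_iff] at hx
      rcases hx with hx | hx
      · exact hsub (hpS x hx)
      · rw [SimpleGraph.Walk.support_reverse, List.mem_reverse] at hx
        exact hsub (hqS x hx)
  have cross : ∀ (w₁ w₂ : Fin n), (colorGraph c i).Adj w₁ w₂ →
      ∀ u' ∈ ball2 c i w₁, ∀ v' ∈ ball2 c i w₂,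
      ball2 c i w₁ ⊆ Uset c i a b → ball2 c i w₂ ⊆ Uset c i a b →
      ∃ p : (colorGraph c i).Walk u' v', p.length ≤ 5 ∧ ∀ x ∈ p.support, x ∈ Uset c i a b := by
    intro w₁ w₂ h12 u' hu' v' hv' hsub1 hsub2
    obtain ⟨p, hp2, hpS⟩ := walk_to_center hu'
    obtain ⟨q, hq2, hqS⟩ := walk_to_center hv'
    refine ⟨p.append (SimpleGraph.Walk.cons h12 q.reverse), ?_, ?_⟩
    · rw [SimpleGraph.Walk.length_append, SimpleGraph.Walk.length_cons,
        SimpleGraph.Walk.length_reverse]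
      omega
    · intro x hx
      rw [SimpleGraph.Walk.mem_support_append_iff] at hx
      rcases hx with hx | hx
      · exact hsub1 (hpS x hx)
      · rw [SimpleGraph.Walk.support_cons, List.mem_cons] at hx
        rcases hx with rfl | hx
        · exact hsub1 (hpS x (SimpleGraph.Walk.end_mem_support p))
        · rw [SimpleGraph.Walk.support_reverse, List.mem_reverse] at hx
          exact hsub2 (hqS x hx)
  rcases hu with hu | hu <;> rcases hv with hv | hv
  · exact same a u hu v hv Finset.subset_union_left
  · exact cross a b hab u hu v hv Finset.subset_union_left Finset.subset_union_right
  · exact cross b a hab.symm u hu v hv Finset.subset_union_right Finset.subset_union_left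
  · exact same b u hu v hv Finset.subset_union_right

lemma bipartite_star (hr : 2 ≤ r) (c : Sym2 (Fin n) → Fin r) (j : Fin r)
    (A B : Finset (Fin n)) (hA : A.Nonempty) (hB : B.Nonempty)
    (hcross : ∀ a ∈ A, ∀ b ∈ B, c s(a, b) ≠ j) :
    ∃ j' : Fin r, j' ≠ j ∧ ∃ a ∈ A, ∃ b ∈ B, c s(a, b) = j' ∧
      ((A.card : ℚ) + B.card) / ((r : ℚ) - 1) ≤
        ((B.filter fun y => c s(a, y) = j').card : ℚ) +
          ((A.filter fun x => c s(x, b) = j').card : ℚ) := by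
  classical
  set w : Fin r → ℕ := fun j' => ∑ a ∈ A, (B.filter fun y => c s(a, y) = j').card with hw
  -- total count
  have htot : ∑ j' ∈ Finset.univ.erase j, w j' = A.card * B.card := by
    have h1 : ∀ j', w j' = ∑ a ∈ A, ∑ b ∈ B, if c s(a, b) = j' then 1 else 0 := by
      intro j'
      exact Finset.sum_congr rfl fun a _ => Finset.card_filter _ _
    calc ∑ j' ∈ Finset.univ.erase j, w j'
        = ∑ a ∈ A, ∑ j' ∈ Finset.univ.erase j, ∑ b ∈ B, if c s(a, b) = j' then 1 else 0 := by
          simp_rw [h1]; rw [Finset.sum_comm]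
      _ = ∑ a ∈ A, ∑ b ∈ B, ∑ j' ∈ Finset.univ.erase j, (if c s(a, b) = j' then 1 else 0) := by
          refine Finset.sum_congr rfl fun a _ => ?_
          rw [Finset.sum_comm]
      _ = ∑ a ∈ A, ∑ b ∈ B, 1 := by
          refine Finset.sum_congr rfl fun a ha => Finset.sum_congr rfl fun b hb => ?_
          rw [Finset.sum_ite_eq, if_pos]
          exact Finset.mem_erase.2 ⟨hcross a ha b hb, Finset.mem_univ _⟩
      _ = A.card * B.card := by simp [mul_comm]
  -- pigeonhole over the r - 1 colors
  have hcarde : (Finset.univ.erase j).card = r - 1 := by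
    rw [Finset.card_erase_of_mem (Finset.mem_univ _), Finset.card_univ, Fintype.card_fin]
  have hene : (Finset.univ.erase j).Nonempty := by
    rw [← Finset.card_pos, hcarde]; omega
  have hpig : ∃ j' ∈ Finset.univ.erase j, A.card * B.card ≤ (r - 1) * w j' := by
    by_contra hno
    push_neg at hno
    have hlt : ∑ j' ∈ Finset.univ.erase j, (r - 1) * w j' <
        ∑ _j' ∈ Finset.univ.erase j, A.card * B.card :=
      Finset.sum_lt_sum_of_nonempty hene fun j' hj' => hno j' hj'
    rw [← Finset.mul_sum, htot, Finset.sum_const, hcarde, smul_eq_mul] at hlt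
    exact lt_irrefl _ hlt
  obtain ⟨j', hj'mem, hpig⟩ := hpig
  have hj'ne : j' ≠ j := (Finset.mem_erase.1 hj'mem).1
  -- basic positivity
  have hABpos : 1 ≤ A.card * B.card :=
    Nat.one_le_iff_ne_zero.2 (Nat.mul_ne_zero (Finset.card_ne_zero_of_mem hA.choose_spec)
      (Finset.card_ne_zero_of_mem hB.choose_spec))
  have hepos : 1 ≤ w j' := by
    rcases Nat.eq_zero_or_pos (w j') with h | h
    · rw [h, mul_zero] at hpig; omega
    · exact h
  -- move to ℚ
  set Aq : ℚ := (A.card : ℚ) with hAq'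
  set Bq : ℚ := (B.card : ℚ) with hBq'
  set eq : ℚ := (w j' : ℚ) with heq'
  set ρ : ℚ := (r : ℚ) - 1 with hρ'
  have hρ : 0 < ρ := by
    have : (2 : ℚ) ≤ (r : ℚ) := by exact_mod_cast hr
    rw [hρ']; linarith
  have hAqpos : 0 < Aq := by rw [hAq']; exact_mod_cast Finset.card_pos.2 hA
  have hBqpos : 0 < Bq := by rw [hBq']; exact_mod_cast Finset.card_pos.2 hB
  have heqpos : 0 < eq := by rw [heq']; exact_mod_cast hepos
  have hpigQ : Aq * Bq ≤ ρ * eq := by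
    have h1 : ((r - 1 : ℕ) : ℚ) = ρ := by
      rw [hρ', Nat.cast_sub (by omega : 1 ≤ r), Nat.cast_one]
    calc Aq * Bq = ((A.card * B.card : ℕ) : ℚ) := by push_cast; ring
      _ ≤ (((r - 1) * w j' : ℕ) : ℚ) := by exact_mod_cast hpig
      _ = ρ * eq := by rw [Nat.cast_mul, h1]
  -- degrees
  set dB : Fin n → ℚ := fun a => ((B.filter fun y => c s(a, y) = j').card : ℚ) with hdB
  set dA : Fin n → ℚ := fun b => ((A.filter fun x => c s(x, b) = j').card : ℚ) with hdA
  have hsum1 : ∑ a ∈ A, dB a = eq := by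
    rw [heq', hw]; push_cast; rfl
  have hsum2 : ∑ b ∈ B, dA b = eq := by
    have : ∑ b ∈ B, (A.filter fun x => c s(x, b) = j').card = w j' := by
      rw [hw]
      simp_rw [Finset.card_filter]
      rw [Finset.sum_comm]
    rw [heq', ← this]; push_cast; rfl
  -- the set of j'-colored pairs
  set P : Finset (Fin n × Fin n) := (A ×ˢ B).filter (fun p => c s(p.1, p.2) = j') with hP
  have hPcard : P.card = w j' := by
    rw [hP, Finset.card_filter, Finset.sum_product, hw]
    exact Finset.sum_congr rfl fun a _ => (Finset.card_filter _ _).symm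
  have hPne : P.Nonempty := by
    rw [← Finset.card_pos, hPcard]; omega
  -- sum over P of degree sums equals sum of squares
  have hTsum : ∑ p ∈ P, (dB p.1 + dA p.2) = (∑ a ∈ A, dB a ^ 2) + ∑ b ∈ B, dA b ^ 2 := by
    rw [Finset.sum_add_distrib]
    congr 1
    · rw [hP, Finset.sum_filter, Finset.sum_product]
      refine Finset.sum_congr rfl fun a _ => ?_
      have hbeta : ∀ b ∈ B, (if c s((a, b).1, (a, b).2) = j' then dB (a, b).1 else 0) =
          (if c s(a, b) = j' then dB a else 0) := fun b _ => rfl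
      refine (Finset.sum_congr rfl hbeta).trans ?_
      rw [← Finset.sum_filter, Finset.sum_const, nsmul_eq_mul, sq]
    · rw [hP, Finset.sum_filter, Finset.sum_product, Finset.sum_comm]
      refine Finset.sum_congr rfl fun b _ => ?_
      have hbeta : ∀ a ∈ A, (if c s((a, b).1, (a, b).2) = j' then dA (a, b).2 else 0) =
          (if c s(a, b) = j' then dA b else 0) := fun a _ => rfl
      refine (Finset.sum_congr rfl hbeta).trans ?_
      rw [← Finset.sum_filter, Finset.sum_const, nsmul_eq_mul, sq]
  -- Cauchy-Schwarz
  have hCS1 : eq ^ 2 ≤ Aq * ∑ a ∈ A, dB a ^ 2 := by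
    rw [← hsum1, hAq']
    exact sq_sum_le_card_mul_sum_sq
  have hCS2 : eq ^ 2 ≤ Bq * ∑ b ∈ B, dA b ^ 2 := by
    rw [← hsum2, hBq']
    exact sq_sum_le_card_mul_sum_sq
  -- averaging: some pair has large degree sum
  have havg : ∃ p ∈ P, eq / Aq + eq / Bq ≤ dB p.1 + dA p.2 := by
    by_contra hno
    push_neg at hno
    have hlt : ∑ p ∈ P, (dB p.1 + dA p.2) < ∑ _p ∈ P, (eq / Aq + eq / Bq) :=
      Finset.sum_lt_sum_of_nonempty hPne hno
    rw [Finset.sum_const, hPcard, nsmul_eq_mul, ← heq', hTsum] at hlt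
    have h1 : (∑ a ∈ A, dB a ^ 2) + ∑ b ∈ B, dA b ^ 2 ≥ eq * (eq / Aq + eq / Bq) := by
      have e1 : eq * (eq / Aq) = eq ^ 2 / Aq := by ring
      have e2 : eq * (eq / Bq) = eq ^ 2 / Bq := by ring
      have d1 : eq ^ 2 / Aq ≤ ∑ a ∈ A, dB a ^ 2 := by
        rw [div_le_iff₀ hAqpos]; linarith [hCS1]
      have d2 : eq ^ 2 / Bq ≤ ∑ b ∈ B, dA b ^ 2 := by
        rw [div_le_iff₀ hBqpos]; linarith [hCS2]
      calc eq * (eq / Aq + eq / Bq) = eq ^ 2 / Aq + eq ^ 2 / Bq := by ring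
        _ ≤ _ := add_le_add d1 d2
    linarith
  obtain ⟨p, hpP, hkey⟩ := havg
  rw [hP, Finset.mem_filter, Finset.mem_product] at hpP
  refine ⟨j', hj'ne, p.1, hpP.1.1, p.2, hpP.1.2, hpP.2, ?_⟩
  have hfin1 : Bq / ρ ≤ eq / Aq := by
    rw [div_le_div_iff₀ hρ hAqpos]
    nlinarith [hpigQ]
  have hfin2 : Aq / ρ ≤ eq / Bq := by
    rw [div_le_div_iff₀ hρ hBqpos]
    nlinarith [hpigQ]
  calc (Aq + Bq) / ρ = Aq / ρ + Bq / ρ := by ring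
    _ ≤ eq / Bq + eq / Aq := add_le_add hfin2 hfin1
    _ = eq / Aq + eq / Bq := by ring
    _ ≤ dB p.1 + dA p.2 := hkey


lemma nbr_subset_Aset_left {c : Sym2 (Fin n) → Fin r} {i : Fin r} {a b : Fin n} :
    nbr c i a ⊆ Aset c i a b := fun x hx =>
  Finset.mem_insert.2 (Or.inr (Finset.mem_insert.2 (Or.inr (Finset.mem_union_left _ hx))))

lemma nbr_subset_Aset_right {c : Sym2 (Fin n) → Fin r} {i : Fin r} {a b : Fin n} :
    nbr c i b ⊆ Aset c i a b := fun x hx =>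
  Finset.mem_insert.2 (Or.inr (Finset.mem_insert.2 (Or.inr (Finset.mem_union_right _ hx))))

end Ruszinko

/-- Ruszinkó's theorem: for `r ≥ 2`, every `r`-edge-coloring of `K_n` contains a
monochromatic connected subgraph of diameter at most 5 on at least `n/(r-1)`
vertices. -/
theorem monochromatic_diam_five_ruszinko
    (n r : ℕ) (hr : 2 ≤ r) (c : Sym2 (Fin n) → Fin r) :
    ∃ (i : Fin r) (S : Finset (Fin n)),
      (n : ℚ) / ((r : ℚ) - 1) ≤ S.card ∧
      ∀ u ∈ S, ∀ v ∈ S, ∃ p : (colorGraph c i).Walk u v,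
        p.length ≤ 5 ∧ ∀ x ∈ p.support, x ∈ S := by
  classical
  have hi0 : (0 : ℕ) < r := by omega
  have hrq : (2 : ℚ) ≤ (r : ℚ) := by exact_mod_cast hr
  have hρpos : (0 : ℚ) < (r : ℚ) - 1 := by linarith
  by_cases hn2 : n < 2
  · interval_cases n
    · exact ⟨⟨0, hi0⟩, ∅, by norm_num, fun u hu => absurd hu (Finset.notMem_empty u)⟩
    · refine ⟨⟨0, hi0⟩, Finset.univ, ?_, ?_⟩
      · rw [Finset.card_univ, Fintype.card_fin]
        push_cast
        rw [div_le_one hρpos]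
        linarith
      · intro u hu v hv
        have hu0 : (u : ℕ) = 0 := Nat.lt_one_iff.mp u.isLt
        have hv0 : (v : ℕ) = 0 := Nat.lt_one_iff.mp v.isLt
        have huv : u = v := Fin.ext (hu0.trans hv0.symm)
        subst huv
        refine ⟨SimpleGraph.Walk.nil, by simp, ?_⟩
        intro x _
        exact Finset.mem_univ x
  · push_neg at hn2
    by_contra hcon
    have hsmall : ∀ (i : Fin r) (a b : Fin n), a ≠ b → c s(a, b) = i →
        ((Ruszinko.Uset c i a b).card : ℚ) < (n : ℚ) / ((r : ℚ) - 1) := by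
      intro i a b hne hci
      by_contra hge
      push_neg at hge
      exact hcon ⟨i, Ruszinko.Uset c i a b, hge, Ruszinko.good_Uset hne hci⟩
    set cfgs : Finset (Fin r × Fin n × Fin n) :=
      Finset.univ.filter (fun t => t.2.1 ≠ t.2.2 ∧ c s(t.2.1, t.2.2) = t.1) with hcfgs
    have hcfgsne : cfgs.Nonempty := by
      refine ⟨(c s((⟨0, by omega⟩ : Fin n), (⟨1, by omega⟩ : Fin n)),
        (⟨0, by omega⟩ : Fin n), (⟨1, by omega⟩ : Fin n)), ?_⟩
      rw [hcfgs, Finset.mem_filter]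
      refine ⟨Finset.mem_univ _, ?_, rfl⟩
      intro h
      have := congrArg Fin.val h
      simp at this
    obtain ⟨t, htmem, htmin⟩ := Finset.exists_min_image cfgs
      (fun t => (Ruszinko.Uset c t.1 t.2.1 t.2.2).card - (Ruszinko.Aset c t.1 t.2.1 t.2.2).card)
      hcfgsne
    obtain ⟨j, a, b⟩ := t
    rw [hcfgs, Finset.mem_filter] at htmem
    obtain ⟨-, hne, hcol⟩ := htmem
    simp only at hne hcol htmin
    set U : Finset (Fin n) := Ruszinko.Uset c j a b with hU
    set A : Finset (Fin n) := Ruszinko.Aset c j a b with hA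
    set B : Finset (Fin n) := Finset.univ \ U with hB
    have hAU : A ⊆ U := Ruszinko.Aset_subset_Uset
    have hUlt : (U.card : ℚ) < (n : ℚ) / ((r : ℚ) - 1) := hsmall j a b hne hcol
    have hmn : (n : ℚ) / ((r : ℚ) - 1) ≤ (n : ℚ) :=
      div_le_self (by positivity) (by linarith)
    have hUn : U.card < n := by exact_mod_cast lt_of_lt_of_le hUlt hmn
    have hBne : B.Nonempty := by
      rw [hB, Finset.sdiff_nonempty]
      intro hsub
      have := Finset.card_le_card hsub
      rw [Finset.card_univ, Fintype.card_fin] at this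
      omega
    have hAne : A.Nonempty := ⟨a, Finset.mem_insert_self _ _⟩
    have hdisj : Disjoint A B := by
      have h1 : Disjoint U (Finset.univ \ U) := Finset.disjoint_sdiff
      exact h1.mono_left hAU
    have hcross : ∀ x ∈ A, ∀ y ∈ B, c s(x, y) ≠ j := by
      intro x hx y hy h
      have hyU : y ∉ U := (Finset.mem_sdiff.1 hy).2
      apply hyU
      have hxy : x ≠ y := by
        rintro rfl
        exact hyU (hAU hx)
      rw [hA] at hx
      simp only [Ruszinko.Aset, Finset.mem_insert, Finset.mem_union] at hx
      rw [hU]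
      rcases hx with rfl | rfl | hx | hx
      · exact Finset.mem_union_left _ (Ruszinko.mem_ball2.2 (Or.inr (Or.inl ⟨hxy, h⟩)))
      · exact Finset.mem_union_right _ (Ruszinko.mem_ball2.2 (Or.inr (Or.inl ⟨hxy, h⟩)))
      · obtain ⟨hax, hcax⟩ := Ruszinko.mem_nbr.1 hx
        exact Finset.mem_union_left _
          (Ruszinko.mem_ball2.2 (Or.inr (Or.inr ⟨x, ⟨hax, hcax⟩, hxy, h⟩)))
      · obtain ⟨hbx, hcbx⟩ := Ruszinko.mem_nbr.1 hx
        exact Finset.mem_union_right _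
          (Ruszinko.mem_ball2.2 (Or.inr (Or.inr ⟨x, ⟨hbx, hcbx⟩, hxy, h⟩)))
    obtain ⟨j', hj'ne, a', ha', b', hb', hcol', hstar⟩ :=
      Ruszinko.bipartite_star hr c j A B hAne hBne hcross
    have hb'U : b' ∉ U := (Finset.mem_sdiff.1 hb').2
    have hne' : a' ≠ b' := by
      rintro rfl
      exact hb'U (hAU ha')
    -- the new configuration
    set U' : Finset (Fin n) := Ruszinko.Uset c j' a' b' with hU'
    set A' : Finset (Fin n) := Ruszinko.Aset c j' a' b' with hA'
    have hA'U' : A' ⊆ U' := Ruszinko.Aset_subset_Uset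
    have hU'lt : (U'.card : ℚ) < (n : ℚ) / ((r : ℚ) - 1) := hsmall j' a' b' hne' hcol'
    -- the star fits inside A'
    have hsub1 : B.filter (fun y => c s(a', y) = j') ⊆ Ruszinko.nbr c j' a' := by
      intro y hy
      obtain ⟨hyB, hyc⟩ := Finset.mem_filter.1 hy
      refine Ruszinko.mem_nbr.2 ⟨?_, hyc⟩
      rintro rfl
      exact (Finset.mem_sdiff.1 hyB).2 (hAU ha')
    have hsub2 : A.filter (fun x => c s(x, b') = j') ⊆ Ruszinko.nbr c j' b' := by
      intro x hx
      obtain ⟨hxA, hxc⟩ := Finset.mem_filter.1 hx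
      refine Ruszinko.mem_nbr.2 ⟨?_, ?_⟩
      · rintro rfl
        exact hb'U (hAU hxA)
      · rw [Sym2.eq_swap]; exact hxc
    have hdisj2 : Disjoint (B.filter (fun y => c s(a', y) = j'))
        (A.filter (fun x => c s(x, b') = j')) :=
      (hdisj.symm).mono (Finset.filter_subset _ _) (Finset.filter_subset _ _)
    have hcardA' : ((B.filter (fun y => c s(a', y) = j')).card : ℚ) +
        ((A.filter (fun x => c s(x, b') = j')).card : ℚ) ≤ (A'.card : ℚ) := by
      have h1 : (B.filter (fun y => c s(a', y) = j')) ∪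
          (A.filter (fun x => c s(x, b') = j')) ⊆ A' := by
        apply Finset.union_subset
        · exact hsub1.trans Ruszinko.nbr_subset_Aset_left
        · exact hsub2.trans Ruszinko.nbr_subset_Aset_right
      have h2 := Finset.card_le_card h1
      rw [Finset.card_union_of_disjoint hdisj2] at h2
      exact_mod_cast h2
    -- arithmetic
    have hUcard_le : U.card ≤ n := by omega
    have hBcard : (B.card : ℚ) = (n : ℚ) - U.card := by
      rw [hB, Finset.card_sdiff_of_subset (Finset.subset_univ _), Finset.card_univ, Fintype.card_fin]
      rw [Nat.cast_sub hUcard_le]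
    have hAcard_le : A.card ≤ U.card := Finset.card_le_card hAU
    have hA'card_le : A'.card ≤ U'.card := Finset.card_le_card hA'U'
    set fcur : ℕ := U.card - A.card with hfcur
    set fnew : ℕ := U'.card - A'.card with hfnew
    have hfcurq : (fcur : ℚ) = (U.card : ℚ) - A.card := by
      rw [hfcur, Nat.cast_sub hAcard_le]
    have hfnewq : (fnew : ℚ) = (U'.card : ℚ) - A'.card := by
      rw [hfnew, Nat.cast_sub hA'card_le]
    have hABsum : (A.card : ℚ) + B.card = (n : ℚ) - fcur := by
      rw [hBcard, hfcurq]; ring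
    have hA'ge : ((n : ℚ) - fcur) / ((r : ℚ) - 1) ≤ (A'.card : ℚ) := by
      rw [← hABsum]
      exact hstar.trans hcardA'
    have hmincfg : (j', a', b') ∈ cfgs := by
      rw [hcfgs, Finset.mem_filter]
      exact ⟨Finset.mem_univ _, hne', hcol'⟩
    have hmin : fcur ≤ fnew := htmin (j', a', b') hmincfg
    have hminq : (fcur : ℚ) ≤ (fnew : ℚ) := by exact_mod_cast hmin
    have hfnew_lt : (fnew : ℚ) < (fcur : ℚ) / ((r : ℚ) - 1) := by
      have hid : (n : ℚ) / ((r : ℚ) - 1) - ((n : ℚ) - fcur) / ((r : ℚ) - 1)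
          = (fcur : ℚ) / ((r : ℚ) - 1) := by ring
      rw [hfnewq]
      linarith
    have hdiv : (fcur : ℚ) / ((r : ℚ) - 1) ≤ (fcur : ℚ) :=
      div_le_self (by positivity) (by linarith)
    linarith
end

section
/- Let a 3-edge-coloring of the complete graph K_n on n vertices be given in which every color class is a spanning connected subgraph. If some color class contains two vertices at distance at least 5 in that color class, then there is a monochromatic connected subgraph of diameter at most 3 on at least n/2 vertices. -/
namespace MonoAux

variable {n : ℕ} (c : Sym2 (Fin n) → Fin 3)

lemma color_symm (x y : Fin n) : c s(x, y) = c s(y, x) := by rw [Sym2.eq_swap]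

def dsSet (κ : Fin 3) (a b : Fin n) : Finset (Fin n) :=
  Finset.univ.filter (fun x => x = a ∨ x = b ∨ c s(x, a) = κ ∨ c s(x, b) = κ)

lemma mem_dsSet {κ : Fin 3} {a b x : Fin n} :
    x ∈ dsSet c κ a b ↔ (x = a ∨ x = b ∨ c s(x, a) = κ ∨ c s(x, b) = κ) := by
  simp [dsSet]

lemma not_mem_dsSet {κ : Fin 3} {a b x : Fin n} :
    x ∉ dsSet c κ a b ↔ (x ≠ a ∧ x ≠ b ∧ c s(x, a) ≠ κ ∧ c s(x, b) ≠ κ) := by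
  simp only [dsSet, Finset.mem_filter, Finset.mem_univ, true_and]
  tauto

lemma left_mem_dsSet {κ : Fin 3} {a b : Fin n} : a ∈ dsSet c κ a b :=
  (mem_dsSet c).mpr (Or.inl rfl)

lemma right_mem_dsSet {κ : Fin 3} {a b : Fin n} : b ∈ dsSet c κ a b :=
  (mem_dsSet c).mpr (Or.inr (Or.inl rfl))

lemma hop (κ : Fin 3) {x y : Fin n} (h : x = y ∨ (x ≠ y ∧ c s(x, y) = κ)) :
    ∃ p : (colorGraph c κ).Walk x y, p.length ≤ 1 ∧ ∀ z ∈ p.support, z = x ∨ z = y := by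
  rcases h with rfl | ⟨hne, hc⟩
  · exact ⟨SimpleGraph.Walk.nil, by simp, by simp⟩
  · refine ⟨SimpleGraph.Walk.cons (show (colorGraph c κ).Adj x y from ⟨hne, hc⟩) SimpleGraph.Walk.nil, by simp, ?_⟩
    intro z hz
    simp [SimpleGraph.Walk.support_cons] at hz
    tauto

lemma ds_walks (κ : Fin 3) (a b : Fin n) (hab : a = b ∨ (a ≠ b ∧ c s(a, b) = κ))
    (S : Finset (Fin n)) (haS : a ∈ S) (hbS : b ∈ S)
    (hS : ∀ x ∈ S, x = a ∨ x = b ∨ c s(x, a) = κ ∨ c s(x, b) = κ) :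
    ∀ u ∈ S, ∀ v ∈ S, ∃ p : (colorGraph c κ).Walk u v,
      p.length ≤ 3 ∧ ∀ x ∈ p.support, x ∈ S := by
  have choose : ∀ x ∈ S, ∃ w, (w = a ∨ w = b) ∧ (x = w ∨ (x ≠ w ∧ c s(x, w) = κ)) := by
    intro x hx
    by_cases h1 : x = a
    · exact ⟨a, Or.inl rfl, Or.inl h1⟩
    by_cases h2 : x = b
    · exact ⟨b, Or.inr rfl, Or.inl h2⟩
    rcases hS x hx with h | h | h | h
    · exact absurd h h1
    · exact absurd h h2
    · exact ⟨a, Or.inl rfl, Or.inr ⟨h1, h⟩⟩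
    · exact ⟨b, Or.inr rfl, Or.inr ⟨h2, h⟩⟩
  intro u hu v hv
  obtain ⟨cu, hcu, hu2⟩ := choose u hu
  obtain ⟨cv, hcv, hv2⟩ := choose v hv
  have hmid : cu = cv ∨ (cu ≠ cv ∧ c s(cu, cv) = κ) := by
    rcases hab with heq | ⟨hne, hc⟩
    · left
      rcases hcu with rfl | rfl <;> rcases hcv with rfl | rfl <;> simp [heq]
    · rcases hcu with rfl | rfl <;> rcases hcv with rfl | rfl
      · exact Or.inl rfl
      · exact Or.inr ⟨hne, hc⟩
      · exact Or.inr ⟨hne.symm, by rw [color_symm c]; exact hc⟩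
      · exact Or.inl rfl
  obtain ⟨p1, hp1l, hp1s⟩ := hop c κ hu2
  obtain ⟨p2, hp2l, hp2s⟩ := hop c κ hmid
  obtain ⟨p3, hp3l, hp3s⟩ := hop c κ hv2
  refine ⟨(p1.append p2).append p3.reverse, ?_, ?_⟩
  · simp only [SimpleGraph.Walk.length_append, SimpleGraph.Walk.length_reverse]
    omega
  · have hcuS : cu ∈ S := by rcases hcu with rfl | rfl <;> assumption
    have hcvS : cv ∈ S := by rcases hcv with rfl | rfl <;> assumption
    intro x hx
    rw [SimpleGraph.Walk.mem_support_append_iff] at hx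
    rcases hx with hx | hx
    · rw [SimpleGraph.Walk.mem_support_append_iff] at hx
      rcases hx with hx | hx
      · rcases hp1s x hx with rfl | rfl <;> assumption
      · rcases hp2s x hx with rfl | rfl <;> assumption
    · rw [SimpleGraph.Walk.support_reverse, List.mem_reverse] at hx
      rcases hp3s x hx with rfl | rfl <;> assumption

lemma sum_indicator (D : Finset (Fin n)) :
    (∑ z : Fin n, if z ∈ D then (0 : ℕ) else 1) = n - D.card := by
  have h2 : (∑ z : Fin n, ((if z ∈ D then (1 : ℕ) else 0) + (if z ∈ D then (0 : ℕ) else 1))) = n := by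
    have h : ∀ z : Fin n, ((if z ∈ D then (1 : ℕ) else 0) + (if z ∈ D then (0 : ℕ) else 1)) = 1 := by
      intro z; by_cases h : z ∈ D <;> simp [h]
    simp [h]
  rw [Finset.sum_add_distrib] at h2
  have h1 : (∑ z : Fin n, if z ∈ D then (1 : ℕ) else 0) = D.card := by
    rw [Finset.sum_ite_mem, Finset.univ_inter, Finset.card_eq_sum_ones]
  rw [h1] at h2
  omega

lemma main (hconn : ∀ (i : Fin 3) (u v : Fin n), (colorGraph c i).Reachable u v)
    (i j k : Fin 3) (hij : i ≠ j) (hik : i ≠ k) (hjk : j ≠ k)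
    (hcov : ∀ x : Fin 3, x = i ∨ x = j ∨ x = k)
    (u v : Fin n) (hd : 5 ≤ (colorGraph c i).dist u v)
    (hcuv : c s(u, v) = j) :
    ∃ (κ : Fin 3) (S : Finset (Fin n)),
      (n : ℚ) / 2 ≤ S.card ∧
      ∀ x ∈ S, ∀ y ∈ S, ∃ p : (colorGraph c κ).Walk x y,
        p.length ≤ 3 ∧ ∀ z ∈ p.support, z ∈ S := by
  have hne' : Nonempty (Fin n) := ⟨u⟩
  have hGc : (colorGraph c i).Connected := ⟨fun a b => hconn i a b⟩
  have tri : ∀ a z b : Fin n, (colorGraph c i).dist a b ≤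
      (colorGraph c i).dist a z + (colorGraph c i).dist z b := fun a z b => hGc.dist_triangle
  have adj1 : ∀ a b : Fin n, a ≠ b → c s(a, b) = i → (colorGraph c i).dist a b ≤ 1 := by
    intro a b h1 h2
    simpa using SimpleGraph.dist_le
      (show (colorGraph c i).Walk a b from SimpleGraph.Walk.cons (show (colorGraph c i).Adj a b from ⟨h1, h2⟩) SimpleGraph.Walk.nil)
  have notboth : ∀ a b z : Fin n, 3 ≤ (colorGraph c i).dist a b → z ≠ a → z ≠ b →
      c s(z, a) = i → c s(z, b) = i → False := by
    intro a b z h3 hza hzb h1 h2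
    have d1 : (colorGraph c i).dist a z ≤ 1 := adj1 a z hza.symm (by rw [color_symm c]; exact h1)
    have d2 : (colorGraph c i).dist z b ≤ 1 := adj1 z b hzb h2
    have := tri a z b
    omega
  have huv : u ≠ v := by
    intro h; subst h; rw [SimpleGraph.dist_self] at hd; omega
  -- Case I : the double star of (u,v) in color j is large
  by_cases hs1 : (n : ℚ) / 2 ≤ ((dsSet c j u v).card : ℚ)
  · exact ⟨j, dsSet c j u v, hs1, ds_walks c j u v (Or.inr ⟨huv, hcuv⟩) _
      (left_mem_dsSet c) (right_mem_dsSet c) (fun x hx => (mem_dsSet c).mp hx)⟩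
  push_neg at hs1
  set B := Finset.univ \ dsSet c j u v with hB
  have hcard_le : ∀ D : Finset (Fin n), D.card ≤ n := by
    intro D
    simpa using Finset.card_le_card (Finset.subset_univ D)
  have hBcard : (n : ℚ) / 2 < (B.card : ℚ) := by
    have hcn : B.card = n - (dsSet c j u v).card := by
      rw [hB, Finset.card_sdiff_of_subset (Finset.subset_univ _), Finset.card_univ, Fintype.card_fin]
    rw [hcn, Nat.cast_sub (hcard_le _)]
    linarith
  have hBmem : ∀ z ∈ B, z ≠ u ∧ z ≠ v ∧ c s(z, u) ≠ j ∧ c s(z, v) ≠ j := by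
    intro z hz
    rw [hB, Finset.mem_sdiff] at hz
    exact (not_mem_dsSet c).mp hz.2
  have hclass : ∀ z ∈ B, (c s(z, u) = i ∧ c s(z, v) = k) ∨ (c s(z, u) = k ∧ c s(z, v) = i) ∨
      (c s(z, u) = k ∧ c s(z, v) = k) := by
    intro z hz
    obtain ⟨h1, h2, h3, h4⟩ := hBmem z hz
    have hnii : ¬(c s(z, u) = i ∧ c s(z, v) = i) := fun ⟨a, b⟩ => notboth u v z (by omega) h1 h2 a b
    rcases hcov (c s(z, u)) with h5 | h5 | h5 <;> rcases hcov (c s(z, v)) with h6 | h6 | h6 <;>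
      tauto
  have bigS : ∀ S : Finset (Fin n), B ⊆ S → (n : ℚ) / 2 ≤ (S.card : ℚ) := by
    intro S hsub
    have h := Finset.card_le_card hsub
    have h' : (B.card : ℚ) ≤ (S.card : ℚ) := by exact_mod_cast h
    linarith
  by_cases hP1 : ∃ z ∈ B, c s(z, u) = i
  swap
  · -- no vertex of B is i-adjacent to u : B ∪ {u} is a k-star around u
    refine ⟨k, insert u B, bigS _ (Finset.subset_insert u B),
      ds_walks c k u u (Or.inl rfl) _ (Finset.mem_insert_self u B)
      (Finset.mem_insert_self u B) ?_⟩
    intro x hx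
    rcases Finset.mem_insert.mp hx with rfl | hxB
    · exact Or.inl rfl
    · rcases hclass x hxB with ⟨h, _⟩ | ⟨h, _⟩ | ⟨h, _⟩
      · exact absurd ⟨x, hxB, h⟩ hP1
      · exact Or.inr (Or.inr (Or.inl h))
      · exact Or.inr (Or.inr (Or.inl h))
  obtain ⟨y1, hy1B, hy1u⟩ := hP1
  have hy1v : c s(y1, v) = k := by
    rcases hclass y1 hy1B with ⟨_, h⟩ | ⟨h, _⟩ | ⟨h, _⟩
    · exact h
    · exact absurd (hy1u ▸ h) hik
    · exact absurd (hy1u ▸ h) hik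
  by_cases hst : ∀ z ∈ B, c s(z, v) = i → c s(z, y1) = k
  · -- double star around v and y1 in color k covers B
    have hy1ne : y1 ≠ v := (hBmem y1 hy1B).2.1
    refine ⟨k, insert v (insert y1 B),
      bigS _ (fun z hz => Finset.mem_insert_of_mem (Finset.mem_insert_of_mem hz)),
      ds_walks c k v y1 (Or.inr ⟨hy1ne.symm, by rw [color_symm c]; exact hy1v⟩) _
        (Finset.mem_insert_self v _)
        (Finset.mem_insert_of_mem (Finset.mem_insert_self y1 B)) ?_⟩
    intro x hx
    rcases Finset.mem_insert.mp hx with rfl | hx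
    · exact Or.inl rfl
    rcases Finset.mem_insert.mp hx with rfl | hxB
    · exact Or.inr (Or.inl rfl)
    rcases hclass x hxB with ⟨_, h⟩ | ⟨_, h⟩ | ⟨_, h⟩
    · exact Or.inr (Or.inr (Or.inl h))
    · exact Or.inr (Or.inr (Or.inr (hst x hxB h)))
    · exact Or.inr (Or.inr (Or.inl h))
  push_neg at hst
  obtain ⟨y3, hy3B, hy3v, hy3ne⟩ := hst
  have hy3u : c s(y3, u) = k := by
    rcases hclass y3 hy3B with ⟨_, h⟩ | ⟨h, _⟩ | ⟨_, h⟩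
    · exact absurd (hy3v.symm.trans h) hik
    · exact h
    · exact absurd (hy3v.symm.trans h) hik
  -- distance facts
  have d_uy1 : (colorGraph c i).dist u y1 ≤ 1 :=
    adj1 u y1 (Ne.symm (hBmem y1 hy1B).1) (by rw [color_symm c]; exact hy1u)
  have d_vy3 : (colorGraph c i).dist v y3 ≤ 1 :=
    adj1 v y3 (Ne.symm (hBmem y3 hy3B).2.1) (by rw [color_symm c]; exact hy3v)
  have d_vy1 : 3 ≤ (colorGraph c i).dist v y1 := by
    have h1 := tri u y1 v
    have h2 : (colorGraph c i).dist y1 v = (colorGraph c i).dist v y1 := SimpleGraph.dist_comm ..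
    omega
  have d_uy3 : 4 ≤ (colorGraph c i).dist u y3 := by
    have h1 := tri u y3 v
    have h2 : (colorGraph c i).dist y3 v = (colorGraph c i).dist v y3 := SimpleGraph.dist_comm ..
    omega
  have d_y1y3 : 3 ≤ (colorGraph c i).dist y1 y3 := by
    have h1 := tri u y1 y3
    omega
  have d_y3u : 3 ≤ (colorGraph c i).dist y3 u := by
    have h2 : (colorGraph c i).dist y3 u = (colorGraph c i).dist u y3 := SimpleGraph.dist_comm ..
    omega
  have hny1y3 : y1 ≠ y3 := by
    intro h
    rw [h, hy3u] at hy1u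
    exact hik hy1u.symm
  have hy13j : c s(y1, y3) = j := by
    have hni : c s(y1, y3) ≠ i := by
      intro h
      have := adj1 y1 y3 hny1y3 h
      omega
    have hnk : c s(y1, y3) ≠ k := by
      rw [color_symm c]; exact hy3ne
    rcases hcov (c s(y1, y3)) with h | h | h
    · exact absurd h hni
    · exact h
    · exact absurd h hnk
  -- the other three double stars
  by_cases hs2 : (n : ℚ) / 2 ≤ ((dsSet c k v y1).card : ℚ)
  · exact ⟨k, dsSet c k v y1, hs2, ds_walks c k v y1
      (Or.inr ⟨Ne.symm (hBmem y1 hy1B).2.1, by rw [color_symm c]; exact hy1v⟩) _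
      (left_mem_dsSet c) (right_mem_dsSet c) (fun x hx => (mem_dsSet c).mp hx)⟩
  by_cases hs3 : (n : ℚ) / 2 ≤ ((dsSet c j y1 y3).card : ℚ)
  · exact ⟨j, dsSet c j y1 y3, hs3, ds_walks c j y1 y3 (Or.inr ⟨hny1y3, hy13j⟩) _
      (left_mem_dsSet c) (right_mem_dsSet c) (fun x hx => (mem_dsSet c).mp hx)⟩
  by_cases hs4 : (n : ℚ) / 2 ≤ ((dsSet c k y3 u).card : ℚ)
  · exact ⟨k, dsSet c k y3 u, hs4, ds_walks c k y3 u
      (Or.inr ⟨(hBmem y3 hy3B).1, hy3u⟩) _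
      (left_mem_dsSet c) (right_mem_dsSet c) (fun x hx => (mem_dsSet c).mp hx)⟩
  exfalso
  push_neg at hs2 hs3 hs4
  -- the four exclusion lemmas
  have getcolor : ∀ x : Fin 3, x ≠ j → x ≠ k → x = i := by
    intro x h1 h2; rcases hcov x with h | h | h
    · exact h
    · exact absurd h h1
    · exact absurd h h2
  have getj : ∀ x : Fin 3, x ≠ i → x ≠ k → x = j := by
    intro x h1 h2; rcases hcov x with h | h | h
    · exact absurd h h1
    · exact h
    · exact absurd h h2
  have getk : ∀ x : Fin 3, x ≠ i → x ≠ j → x = k := by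
    intro x h1 h2; rcases hcov x with h | h | h
    · exact absurd h h1
    · exact absurd h h2
    · exact h
  have L12 : ∀ z : Fin n, z ∉ dsSet c j u v → z ∉ dsSet c k v y1 →
      z ∈ dsSet c j y1 y3 ∧ z ∈ dsSet c k y3 u := by
    intro z h1 h2
    obtain ⟨hzu, hzv, hzuj, hzvj⟩ := (not_mem_dsSet c).mp h1
    obtain ⟨_, hzy1, hzvk, hzy1k⟩ := (not_mem_dsSet c).mp h2
    have hvz : c s(z, v) = i := getcolor _ hzvj hzvk
    have hzu' : c s(z, u) = k := by
      refine getk _ (fun h => notboth u v z (by omega) hzu hzv h hvz) hzuj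
    have hzy1' : c s(z, y1) = j := by
      refine getj _ (fun h => notboth v y1 z d_vy1 hzv hzy1 hvz h) hzy1k
    exact ⟨(mem_dsSet c).mpr (Or.inr (Or.inr (Or.inl hzy1'))),
      (mem_dsSet c).mpr (Or.inr (Or.inr (Or.inr hzu')))⟩
  have L23 : ∀ z : Fin n, z ∉ dsSet c k v y1 → z ∉ dsSet c j y1 y3 →
      z ∈ dsSet c k y3 u ∧ z ∈ dsSet c j u v := by
    intro z h2 h3
    obtain ⟨hzv, hzy1, hzvk, hzy1k⟩ := (not_mem_dsSet c).mp h2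
    obtain ⟨_, hzy3, hzy1j, hzy3j⟩ := (not_mem_dsSet c).mp h3
    have hy1z : c s(z, y1) = i := getcolor _ hzy1j hzy1k
    have hzv' : c s(z, v) = j := by
      refine getj _ (fun h => notboth v y1 z d_vy1 hzv hzy1 h hy1z) hzvk
    have hzy3' : c s(z, y3) = k := by
      refine getk _ (fun h => notboth y1 y3 z d_y1y3 hzy1 hzy3 hy1z h) hzy3j
    exact ⟨(mem_dsSet c).mpr (Or.inr (Or.inr (Or.inl hzy3'))),
      (mem_dsSet c).mpr (Or.inr (Or.inr (Or.inr hzv')))⟩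
  have L34 : ∀ z : Fin n, z ∉ dsSet c j y1 y3 → z ∉ dsSet c k y3 u →
      z ∈ dsSet c j u v ∧ z ∈ dsSet c k v y1 := by
    intro z h3 h4
    obtain ⟨hzy1, hzy3, hzy1j, hzy3j⟩ := (not_mem_dsSet c).mp h3
    obtain ⟨_, hzu, hzy3k, hzuk⟩ := (not_mem_dsSet c).mp h4
    have hy3z : c s(z, y3) = i := getcolor _ hzy3j hzy3k
    have hzy1' : c s(z, y1) = k := by
      refine getk _ (fun h => notboth y1 y3 z d_y1y3 hzy1 hzy3 h hy3z) hzy1j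
    have hzu' : c s(z, u) = j := by
      refine getj _ (fun h => notboth y3 u z d_y3u hzy3 hzu hy3z h) hzuk
    exact ⟨(mem_dsSet c).mpr (Or.inr (Or.inr (Or.inl hzu'))),
      (mem_dsSet c).mpr (Or.inr (Or.inr (Or.inr hzy1')))⟩
  have L41 : ∀ z : Fin n, z ∉ dsSet c k y3 u → z ∉ dsSet c j u v →
      z ∈ dsSet c k v y1 ∧ z ∈ dsSet c j y1 y3 := by
    intro z h4 h1
    obtain ⟨hzy3, hzu, hzy3k, hzuk⟩ := (not_mem_dsSet c).mp h4
    obtain ⟨_, hzv, hzuj, hzvj⟩ := (not_mem_dsSet c).mp h1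
    have huz : c s(z, u) = i := getcolor _ hzuj hzuk
    have hzv' : c s(z, v) = k := by
      refine getk _ (fun h => notboth u v z (by omega) hzu hzv huz h) hzvj
    have hzy3' : c s(z, y3) = j := by
      refine getj _ (fun h => notboth y3 u z d_y3u hzy3 hzu h huz) hzy3k
    exact ⟨(mem_dsSet c).mpr (Or.inr (Or.inr (Or.inl hzv'))),
      (mem_dsSet c).mpr (Or.inr (Or.inr (Or.inr hzy3')))⟩
  -- pointwise bound
  have hpt : ∀ z : Fin n,
      ((if z ∈ dsSet c j u v then (0 : ℕ) else 1) + (if z ∈ dsSet c k v y1 then (0 : ℕ) else 1) +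
       (if z ∈ dsSet c j y1 y3 then (0 : ℕ) else 1) + (if z ∈ dsSet c k y3 u then (0 : ℕ) else 1))
      ≤ 2 := by
    intro z
    by_cases h1 : z ∈ dsSet c j u v <;> by_cases h2 : z ∈ dsSet c k v y1 <;>
      by_cases h3 : z ∈ dsSet c j y1 y3 <;> by_cases h4 : z ∈ dsSet c k y3 u <;>
      simp only [h1, h2, h3, h4, if_true, if_false] <;>
      first
        | omega
        | exact absurd (L12 z h1 h2).1 h3
        | exact absurd (L12 z h1 h2).2 h4
        | exact absurd (L23 z h2 h3).1 h4
        | exact absurd (L23 z h2 h3).2 h1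
        | exact absurd (L34 z h3 h4).1 h1
        | exact absurd (L34 z h3 h4).2 h2
        | exact absurd (L41 z h4 h1).1 h2
        | exact absurd (L41 z h4 h1).2 h3
  have hsum : ((n - (dsSet c j u v).card) + (n - (dsSet c k v y1).card) +
      (n - (dsSet c j y1 y3).card) + (n - (dsSet c k y3 u).card)) ≤ 2 * n := by
    have h := Finset.sum_le_sum (fun z (_ : z ∈ Finset.univ) => hpt z)
    rw [Finset.sum_add_distrib, Finset.sum_add_distrib, Finset.sum_add_distrib,
      sum_indicator, sum_indicator, sum_indicator, sum_indicator] at h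
    have h2 : (∑ _z : Fin n, (2 : ℕ)) = 2 * n := by
      simp [Finset.card_univ, mul_comm]
    omega
  have q1 : 2 * (dsSet c j u v).card < n := by
    have : (2 * (dsSet c j u v).card : ℚ) < n := by push_cast; linarith
    exact_mod_cast this
  have q2 : 2 * (dsSet c k v y1).card < n := by
    have : (2 * (dsSet c k v y1).card : ℚ) < n := by push_cast; linarith
    exact_mod_cast this
  have q3 : 2 * (dsSet c j y1 y3).card < n := by
    have : (2 * (dsSet c j y1 y3).card : ℚ) < n := by push_cast; linarith
    exact_mod_cast this
  have q4 : 2 * (dsSet c k y3 u).card < n := by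
    have : (2 * (dsSet c k y3 u).card : ℚ) < n := by push_cast; linarith
    exact_mod_cast this
  have hle1 := hcard_le (dsSet c j u v)
  have hle2 := hcard_le (dsSet c k v y1)
  have hle3 := hcard_le (dsSet c j y1 y3)
  have hle4 := hcard_le (dsSet c k y3 u)
  omega

end MonoAux

/-- Given a 3-edge-coloring of `K_n` in which every color class is spanning
connected, if some color class has two vertices at distance at least 5, then
there is a monochromatic connected subgraph of diameter at most 3 on at least
`n/2` vertices. -/
theorem monochromatic_diam_three_of_far_vertices
    (n : ℕ) (c : Sym2 (Fin n) → Fin 3)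
    (hconn : ∀ (i : Fin 3) (u v : Fin n), (colorGraph c i).Reachable u v)
    (hfar : ∃ (i : Fin 3) (u v : Fin n), 5 ≤ (colorGraph c i).dist u v) :
    ∃ (i : Fin 3) (S : Finset (Fin n)),
      (n : ℚ) / 2 ≤ S.card ∧
      ∀ u ∈ S, ∀ v ∈ S, ∃ p : (colorGraph c i).Walk u v,
        p.length ≤ 3 ∧ ∀ x ∈ p.support, x ∈ S := by
  obtain ⟨i, u, v, hd⟩ := hfar
  have huv : u ≠ v := by
    intro h; subst h; rw [SimpleGraph.dist_self] at hd; omega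
  have hne : c s(u, v) ≠ i := by
    intro h
    have h1 : (colorGraph c i).dist u v ≤ 1 := by
      simpa using SimpleGraph.dist_le
        (show (colorGraph c i).Walk u v from SimpleGraph.Walk.cons (show (colorGraph c i).Adj u v from ⟨huv, h⟩) SimpleGraph.Walk.nil)
    omega
  obtain ⟨j, k, hij, hik, hjk, hcov⟩ :
      ∃ j k : Fin 3, i ≠ j ∧ i ≠ k ∧ j ≠ k ∧ ∀ x : Fin 3, x = i ∨ x = j ∨ x = k := by
    fin_cases i
    · exact ⟨1, 2, by decide, by decide, by decide, by decide⟩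
    · exact ⟨0, 2, by decide, by decide, by decide, by decide⟩
    · exact ⟨0, 1, by decide, by decide, by decide, by decide⟩
  rcases hcov (c s(u, v)) with h | h | h
  · exact absurd h hne
  · exact MonoAux.main c hconn i j k hij hik hjk hcov u v hd h
  · exact MonoAux.main c hconn i k j hik hij hjk.symm
      (fun x => by rcases hcov x with a | a | a
                   exacts [Or.inl a, Or.inr (Or.inr a), Or.inr (Or.inl a)]) u v hd h
end
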